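/- arXiv:2510.03937 — 3 statements merged into one kernel-verified Lean document; each statement's English description precedes it below -/
import Mathlib

section
/- (Pakes' Lemma) An irreducible Markov chain on the nonnegative integers is positive recurrent if the mean drift gamma_i = E[X_{n+1} - X_n | X_n = i] is finite for every state i and limsup_{i -> infinity} gamma_i < 0. -/
open scoped ENNReal BigOperators
open Filter

/-- A discrete-time Markov chain on the nonnegative integers, given by its
row-stochastic transition matrix. -/
structure MarkovChain where
  p : ℕ → ℕ → ℝ≥0∞
  row_sum : ∀ i, ∑' j, p i j = 1

namespace MarkovChain

/-- `n`-step transition probabilities. -/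
noncomputable def step (M : MarkovChain) : ℕ → ℕ → ℕ → ℝ≥0∞
  | 0, i, j => if i = j then 1 else 0
  | (n+1), i, j => ∑' k, M.p i k * M.step n k j

/-- Irreducibility: every state reaches every other state with positive probability. -/
def Irreducible (M : MarkovChain) : Prop := ∀ i j, ∃ n, 0 < M.step n i j

/-- Probability, starting from `j`, that the chain reaches state `i` for the first
time at time `n` (time `0` counts iff `j = i`). -/
noncomputable def hitAt (M : MarkovChain) (i : ℕ) : ℕ → ℕ → ℝ≥0∞
  | 0, j => if j = i then 1 else 0
  | (n+1), j => if j = i then 0 else ∑' k, M.p j k * M.hitAt i n k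

/-- Probability that the first return to `i` occurs at time `n + 1`. -/
noncomputable def firstReturn (M : MarkovChain) (i n : ℕ) : ℝ≥0∞ :=
  ∑' k, M.p i k * M.hitAt i n k

/-- The chain is recurrent: return to each state is almost sure. -/
def Recurrent (M : MarkovChain) : Prop := ∀ i, ∑' n, M.firstReturn i n = 1

/-- The chain is positive recurrent: recurrent with finite expected return times. -/
def PositiveRecurrent (M : MarkovChain) : Prop :=
  M.Recurrent ∧ ∀ i, ∑' n : ℕ, ((n : ℝ≥0∞) + 1) * M.firstReturn i n < ⊤

/-- Null recurrent: recurrent but not positive recurrent. -/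
def NullRecurrent (M : MarkovChain) : Prop := M.Recurrent ∧ ¬ M.PositiveRecurrent

/-- The chain is transient: return to each state happens with probability `< 1`. -/
def Transient (M : MarkovChain) : Prop := ∀ i, ∑' n, M.firstReturn i n < 1

/-- Mean drift at state `i`. -/
noncomputable def drift (M : MarkovChain) (i : ℕ) : ℝ :=
  ∑' j, (M.p i j).toReal * ((j : ℝ) - i)

/-- The mean drift at `i` is finite (well-defined). -/
def DriftFinite (M : MarkovChain) (i : ℕ) : Prop :=
  Summable fun j => (M.p i j).toReal * ((j : ℝ) - i)

/-- Second-moment drift at state `i`. -/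
noncomputable def secondMoment (M : MarkovChain) (i : ℕ) : ℝ :=
  ∑' j, (M.p i j).toReal * ((j : ℝ) - i) ^ 2

/-- Downward uniformly bounded with bound `k`: no downward jumps longer than `k`. -/
def DownwardBounded (M : MarkovChain) (k : ℕ) : Prop :=
  ∀ i j, j + k < i → M.p i j = 0

/-- Uniformly bounded with bound `d`: no jumps longer than `d`. -/
def UniformlyBounded (M : MarkovChain) (d : ℕ) : Prop :=
  ∀ i j : ℕ, (d : ℤ) < |(i : ℤ) - j| → M.p i j = 0

variable (M : MarkovChain) (i₀ : ℕ)

/-- survival: probability of avoiding `i₀` at all times `≤ n`. -/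
noncomputable def surv (M : MarkovChain) (i₀ : ℕ) : ℕ → ℕ → ℝ≥0∞
  | 0, j => if j = i₀ then 0 else 1
  | (n+1), j => if j = i₀ then 0 else ∑' k, M.p j k * M.surv i₀ n k

/-- taboo kernel: probability of being at `k` at time `n` having avoided `i₀` at all
times `≤ n`. -/
noncomputable def taboo (M : MarkovChain) (i₀ : ℕ) : ℕ → ℕ → ℕ → ℝ≥0∞
  | 0, j, k => if j = i₀ then 0 else if k = j then 1 else 0
  | (n+1), j, k => if j = i₀ then 0 else ∑' l, M.p j l * M.taboo i₀ n l k

variable (M : MarkovChain) (i₀ : ℕ)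

lemma p_le_one (j k : ℕ) : M.p j k ≤ 1 := by
  conv_rhs => rw [← M.row_sum j]
  exact ENNReal.le_tsum k

lemma p_row (j : ℕ) : ∑' k, M.p j k * 1 = 1 := by simpa using M.row_sum j

@[simp] lemma hitAt_zero (j : ℕ) : M.hitAt i₀ 0 j = if j = i₀ then 1 else 0 := rfl
lemma hitAt_succ (n j : ℕ) :
    M.hitAt i₀ (n+1) j = if j = i₀ then 0 else ∑' k, M.p j k * M.hitAt i₀ n k := rfl
@[simp] lemma hitAt_succ_self (n : ℕ) : M.hitAt i₀ (n+1) i₀ = 0 := by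
  rw [hitAt_succ, if_pos rfl]
lemma hitAt_succ_ne (n j : ℕ) (h : j ≠ i₀) :
    M.hitAt i₀ (n+1) j = ∑' k, M.p j k * M.hitAt i₀ n k := by rw [hitAt_succ, if_neg h]

@[simp] lemma surv_zero (j : ℕ) : M.surv i₀ 0 j = if j = i₀ then 0 else 1 := rfl
lemma surv_succ (n j : ℕ) :
    M.surv i₀ (n+1) j = if j = i₀ then 0 else ∑' k, M.p j k * M.surv i₀ n k := rfl
@[simp] lemma surv_self (n : ℕ) : M.surv i₀ n i₀ = 0 := by
  cases n <;> simp [surv_succ]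
lemma surv_succ_ne (n j : ℕ) (h : j ≠ i₀) :
    M.surv i₀ (n+1) j = ∑' k, M.p j k * M.surv i₀ n k := by rw [surv_succ, if_neg h]

lemma surv_le_one : ∀ n j, M.surv i₀ n j ≤ 1 := by
  intro n
  induction n with
  | zero => intro j; by_cases h : j = i₀ <;> simp [h]
  | succ n ih =>
    intro j
    by_cases h : j = i₀
    · simp [h]
    · rw [surv_succ_ne _ _ _ _ h]
      calc ∑' k, M.p j k * M.surv i₀ n k ≤ ∑' k, M.p j k * 1 :=
            ENNReal.tsum_le_tsum fun k => mul_le_mul_right (ih k) _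
        _ = 1 := M.p_row j

lemma surv_succ_le (n j : ℕ) : M.surv i₀ (n+1) j ≤ M.surv i₀ n j := by
  induction n generalizing j with
  | zero =>
    by_cases h : j = i₀
    · simp [h]
    · rw [surv_succ_ne _ _ _ _ h]
      calc ∑' k, M.p j k * M.surv i₀ 0 k ≤ ∑' k, M.p j k * 1 :=
            ENNReal.tsum_le_tsum fun k => mul_le_mul_right (M.surv_le_one i₀ 0 k) _
        _ = 1 := M.p_row j
        _ = M.surv i₀ 0 j := by simp [h]
  | succ n ih =>
    by_cases h : j = i₀
    · simp [h]
    · rw [surv_succ_ne _ _ _ _ h, surv_succ_ne _ _ _ _ h]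
      exact ENNReal.tsum_le_tsum fun k => mul_le_mul_right (ih k) _

lemma surv_anti (j : ℕ) {a b : ℕ} (h : a ≤ b) : M.surv i₀ b j ≤ M.surv i₀ a j := by
  induction b with
  | zero => simp_all
  | succ b ih =>
    rcases Nat.lt_or_ge a (b+1) with hl | hg
    · exact le_trans (M.surv_succ_le i₀ b j) (ih (Nat.lt_succ_iff.mp hl))
    · have : a = b + 1 := le_antisymm h hg
      simp [this]

/-- survival + hit-by-time = 1. -/
lemma surv_add_hit (n j : ℕ) :
    M.surv i₀ n j + ∑ t ∈ Finset.range (n+1), M.hitAt i₀ t j = 1 := by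
  induction n generalizing j with
  | zero => by_cases h : j = i₀ <;> simp [h]
  | succ n ih =>
    by_cases h : j = i₀
    · subst h
      have h2 : ∀ t, M.hitAt j (t+1) j = 0 := fun t => M.hitAt_succ_self j t
      simp [Finset.sum_range_succ', h2]
    · rw [surv_succ_ne _ _ _ _ h]
      have hU : ∑ t ∈ Finset.range (n+2), M.hitAt i₀ t j
          = ∑' k, M.p j k * ∑ t ∈ Finset.range (n+1), M.hitAt i₀ t k := by
        rw [Finset.sum_range_succ']
        simp only [hitAt_zero, if_neg h, add_zero]
        calc ∑ t ∈ Finset.range (n+1), M.hitAt i₀ (t+1) j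
            = ∑ t ∈ Finset.range (n+1), ∑' k, M.p j k * M.hitAt i₀ t k :=
              Finset.sum_congr rfl fun t _ => M.hitAt_succ_ne i₀ t j h
          _ = ∑' k, ∑ t ∈ Finset.range (n+1), M.p j k * M.hitAt i₀ t k :=
              (Summable.tsum_finsetSum fun _ _ => ENNReal.summable).symm
          _ = ∑' k, M.p j k * ∑ t ∈ Finset.range (n+1), M.hitAt i₀ t k :=
              tsum_congr fun k => (Finset.mul_sum _ _ _).symm
      rw [hU, ← ENNReal.tsum_add]
      calc ∑' k, (M.p j k * M.surv i₀ n k + M.p j k * ∑ t ∈ Finset.range (n+1), M.hitAt i₀ t k)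
          = ∑' k, M.p j k * (M.surv i₀ n k + ∑ t ∈ Finset.range (n+1), M.hitAt i₀ t k) :=
            tsum_congr fun k => (mul_add _ _ _).symm
        _ = ∑' k, M.p j k * 1 := tsum_congr fun k => by rw [ih]
        _ = 1 := M.p_row j

lemma hit_le_one (n j : ℕ) : ∑ t ∈ Finset.range n, M.hitAt i₀ t j ≤ 1 := by
  cases n with
  | zero => simp
  | succ n =>
    rw [← M.surv_add_hit i₀ n j]
    exact le_add_self

variable (M : MarkovChain) (i₀ : ℕ)

lemma step_sum (n j : ℕ) : ∑' k, M.step n j k = 1 := by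
  induction n generalizing j with
  | zero =>
    rw [tsum_eq_single j (fun k hk => by simp [step, Ne.symm hk])]
    simp [step]
  | succ n ih =>
    calc ∑' k, M.step (n+1) j k = ∑' k, ∑' l, M.p j l * M.step n l k := rfl
      _ = ∑' l, ∑' k, M.p j l * M.step n l k := ENNReal.tsum_comm
      _ = ∑' l, M.p j l * ∑' k, M.step n l k := tsum_congr fun l => ENNReal.tsum_mul_left
      _ = 1 := by
          rw [show (fun l => M.p j l * ∑' k, M.step n l k) = fun l => M.p j l * 1 from
            funext fun l => by rw [ih l]]
          exact M.p_row j

lemma step_le_hit (n j : ℕ) : M.step n j i₀ ≤ ∑ t ∈ Finset.range (n+1), M.hitAt i₀ t j := by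
  induction n generalizing j with
  | zero => by_cases h : j = i₀ <;> simp [step, h, eq_comm]
  | succ n ih =>
    by_cases h : j = i₀
    · subst h
      calc M.step (n+1) j j ≤ 1 := by
            conv_rhs => rw [← M.step_sum (n+1) j]
            exact ENNReal.le_tsum j
        _ ≤ ∑ t ∈ Finset.range (n+2), M.hitAt j t j := by
            rw [Finset.sum_range_succ']
            simp
    · rw [Finset.sum_range_succ']
      simp only [hitAt_zero, if_neg h, add_zero]
      calc M.step (n+1) j i₀ = ∑' k, M.p j k * M.step n k i₀ := rfl
        _ ≤ ∑' k, M.p j k * ∑ t ∈ Finset.range (n+1), M.hitAt i₀ t k :=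
            ENNReal.tsum_le_tsum fun k => mul_le_mul_right (ih k) _
        _ = ∑ t ∈ Finset.range (n+1), ∑' k, M.p j k * M.hitAt i₀ t k := by
            rw [← Summable.tsum_finsetSum fun _ _ => ENNReal.summable]
            exact tsum_congr fun k => Finset.mul_sum _ _ _
        _ = ∑ t ∈ Finset.range (n+1), M.hitAt i₀ (t+1) j :=
            Finset.sum_congr rfl fun t _ => (M.hitAt_succ_ne i₀ t j h).symm

@[simp] lemma taboo_start (n k : ℕ) : M.taboo i₀ n i₀ k = 0 := by
  cases n <;> simp [taboo]

@[simp] lemma taboo_last (n j : ℕ) : M.taboo i₀ n j i₀ = 0 := by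
  induction n generalizing j with
  | zero =>
    by_cases h : j = i₀ <;> simp [taboo, h]
    exact fun h2 => (h h2.symm).elim
  | succ n ih =>
    by_cases h : j = i₀ <;> simp [taboo, h, ih]

lemma taboo_sum (n j : ℕ) : ∑' k, M.taboo i₀ n j k = M.surv i₀ n j := by
  induction n generalizing j with
  | zero =>
    by_cases h : j = i₀
    · simp [taboo, h]
    · rw [tsum_eq_single j (fun k hk => by simp [taboo, h, hk])]
      simp [taboo, h]
  | succ n ih =>
    by_cases h : j = i₀
    · simp [taboo, h]
    · calc ∑' k, M.taboo i₀ (n+1) j k = ∑' k, ∑' l, M.p j l * M.taboo i₀ n l k := by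
            simp [taboo, h]
        _ = ∑' l, M.p j l * ∑' k, M.taboo i₀ n l k := by
            rw [ENNReal.tsum_comm]; exact tsum_congr fun l => ENNReal.tsum_mul_left
        _ = ∑' l, M.p j l * M.surv i₀ n l := tsum_congr fun l => by rw [ih l]
        _ = M.surv i₀ (n+1) j := (M.surv_succ_ne i₀ n j h).symm

lemma taboo_le_one (n j k : ℕ) : M.taboo i₀ n j k ≤ 1 := by
  calc M.taboo i₀ n j k ≤ ∑' k, M.taboo i₀ n j k := ENNReal.le_tsum k
    _ = M.surv i₀ n j := M.taboo_sum i₀ n j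
    _ ≤ 1 := M.surv_le_one i₀ n j

/-- Chapman-Kolmogorov for the taboo kernel: first `t` steps, then `n` steps. -/
lemma taboo_chapman (n t j k : ℕ) :
    M.taboo i₀ (n + t) j k = ∑' l, M.taboo i₀ t j l * M.taboo i₀ n l k := by
  induction t generalizing j with
  | zero =>
    by_cases h : j = i₀
    · simp [h]
    · rw [tsum_eq_single j (fun l hl => by simp [taboo, h, hl])]
      simp [taboo, h]
  | succ t ih =>
    by_cases h : j = i₀
    · simp [h]
    · have e1 : n + (t + 1) = (n + t) + 1 := by omega
      rw [e1]
      calc M.taboo i₀ ((n+t)+1) j k = ∑' l, M.p j l * M.taboo i₀ (n+t) l k := by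
            simp [taboo, h]
        _ = ∑' l, M.p j l * ∑' m, M.taboo i₀ t l m * M.taboo i₀ n m k :=
            tsum_congr fun l => by rw [ih l]
        _ = ∑' l, ∑' m, M.p j l * (M.taboo i₀ t l m * M.taboo i₀ n m k) :=
            tsum_congr fun l => ENNReal.tsum_mul_left.symm
        _ = ∑' m, ∑' l, M.p j l * M.taboo i₀ t l m * M.taboo i₀ n m k := by
            rw [ENNReal.tsum_comm]
            exact tsum_congr fun m => tsum_congr fun l => by ring
        _ = ∑' m, (∑' l, M.p j l * M.taboo i₀ t l m) * M.taboo i₀ n m k :=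
            tsum_congr fun m => ENNReal.tsum_mul_right
        _ = ∑' m, M.taboo i₀ (t+1) j m * M.taboo i₀ n m k :=
            tsum_congr fun m => by simp [taboo, h]
/-- first entry time/state into `{0,...,N'}` while avoiding `i₀`. -/
noncomputable def fent (M : MarkovChain) (i₀ N' : ℕ) : ℕ → ℕ → ℕ → ℝ≥0∞
  | 0, j, a => if j ≠ i₀ ∧ j ≤ N' ∧ a = j then 1 else 0
  | (n+1), j, a => if j = i₀ ∨ j ≤ N' then 0 else ∑' k, M.p j k * M.fent i₀ N' n k a

noncomputable def rho (M : MarkovChain) (i₀ N' : ℕ) (n j : ℕ) : ℝ≥0∞ :=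
  ∑ a ∈ Finset.range (N'+1), M.taboo i₀ n j a

noncomputable def Phi (M : MarkovChain) (i₀ N' : ℕ) (T j : ℕ) : ℝ≥0∞ :=
  ∑ t ∈ Finset.range T, M.rho i₀ N' t j

noncomputable def phi (M : MarkovChain) (i₀ N' : ℕ) (j : ℕ) : ℝ≥0∞ :=
  ∑' n, M.rho i₀ N' n j

variable (N' : ℕ)

@[simp] lemma rho_start (n : ℕ) : M.rho i₀ N' n i₀ = 0 := by
  simp [rho]

lemma rho_zero (j : ℕ) (h : j ≠ i₀) :
    M.rho i₀ N' 0 j = if j ≤ N' then 1 else 0 := by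
  by_cases hj : j ≤ N'
  · rw [if_pos hj, rho, Finset.sum_eq_single j]
    · simp [taboo, h]
    · intro a _ ha; simp [taboo, h, ha]
    · intro hm; exact absurd (Finset.mem_range.mpr (by omega)) hm
  · rw [if_neg hj, rho]
    apply Finset.sum_eq_zero
    intro a ha
    have : a ≠ j := by have := Finset.mem_range.mp ha; omega
    simp [taboo, h, this]

lemma rho_succ (n j : ℕ) (h : j ≠ i₀) :
    M.rho i₀ N' (n+1) j = ∑' k, M.p j k * M.rho i₀ N' n k := by
  calc M.rho i₀ N' (n+1) j = ∑ a ∈ Finset.range (N'+1), ∑' k, M.p j k * M.taboo i₀ n k a := by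
        unfold rho; exact Finset.sum_congr rfl fun a _ => by simp [taboo, h]
    _ = ∑' k, ∑ a ∈ Finset.range (N'+1), M.p j k * M.taboo i₀ n k a :=
        (Summable.tsum_finsetSum fun _ _ => ENNReal.summable).symm
    _ = ∑' k, M.p j k * M.rho i₀ N' n k :=
        tsum_congr fun k => by rw [rho, Finset.mul_sum]

lemma rho_le_one (n j : ℕ) : M.rho i₀ N' n j ≤ 1 := by
  calc M.rho i₀ N' n j ≤ ∑' k, M.taboo i₀ n j k := ENNReal.sum_le_tsum _
    _ = M.surv i₀ n j := M.taboo_sum i₀ n j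
    _ ≤ 1 := M.surv_le_one i₀ n j

lemma rho_block (v t j : ℕ) :
    M.rho i₀ N' (t + v) j = ∑' l, M.taboo i₀ v j l * M.rho i₀ N' t l := by
  calc M.rho i₀ N' (t + v) j
      = ∑ a ∈ Finset.range (N'+1), ∑' l, M.taboo i₀ v j l * M.taboo i₀ t l a :=
        Finset.sum_congr rfl fun a _ => M.taboo_chapman i₀ t v j a
    _ = ∑' l, ∑ a ∈ Finset.range (N'+1), M.taboo i₀ v j l * M.taboo i₀ t l a :=
        (Summable.tsum_finsetSum fun _ _ => ENNReal.summable).symm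
    _ = ∑' l, M.taboo i₀ v j l * M.rho i₀ N' t l :=
        tsum_congr fun l => by rw [rho, Finset.mul_sum]

lemma Phi_mono (j : ℕ) {a b : ℕ} (h : a ≤ b) : M.Phi i₀ N' a j ≤ M.Phi i₀ N' b j :=
  Finset.sum_le_sum_of_subset (Finset.range_subset_range.mpr h)

lemma Phi_le (T j : ℕ) : M.Phi i₀ N' T j ≤ T := by
  calc M.Phi i₀ N' T j ≤ ∑ t ∈ Finset.range T, 1 :=
      Finset.sum_le_sum fun t _ => M.rho_le_one i₀ N' t j
    _ = T := by simp

/-- Block decomposition of `Phi`. -/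
lemma Phi_block (u v j : ℕ) :
    M.Phi i₀ N' (v + u) j = M.Phi i₀ N' v j + ∑' l, M.taboo i₀ v j l * M.Phi i₀ N' u l := by
  rw [Phi, Finset.range_eq_Ico, ← Finset.sum_Ico_consecutive _ (Nat.zero_le v) (Nat.le_add_right v u),
    ← Finset.range_eq_Ico]
  congr 1
  rw [Finset.sum_Ico_eq_sum_range]
  simp only [Nat.add_sub_cancel_left]  -- might need fixing: v + u - v = u
  calc ∑ t ∈ Finset.range u, M.rho i₀ N' (v + t) j
      = ∑ t ∈ Finset.range u, ∑' l, M.taboo i₀ v j l * M.rho i₀ N' t l :=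
        Finset.sum_congr rfl fun t _ => by rw [Nat.add_comm v t]; exact M.rho_block i₀ N' v t j
    _ = ∑' l, ∑ t ∈ Finset.range u, M.taboo i₀ v j l * M.rho i₀ N' t l :=
        (Summable.tsum_finsetSum fun _ _ => ENNReal.summable).symm
    _ = ∑' l, M.taboo i₀ v j l * M.Phi i₀ N' u l :=
        tsum_congr fun l => by rw [Phi, Finset.mul_sum]
@[simp] lemma fent_start (n a : ℕ) : M.fent i₀ N' n i₀ a = 0 := by
  cases n <;> simp [fent]

lemma fent_zero (j a : ℕ) :
    M.fent i₀ N' 0 j a = if j ≠ i₀ ∧ j ≤ N' ∧ a = j then 1 else 0 := rfl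

lemma fent_succ (n j a : ℕ) :
    M.fent i₀ N' (n+1) j a =
      if j = i₀ ∨ j ≤ N' then 0 else ∑' k, M.p j k * M.fent i₀ N' n k a := rfl

/-- total mass of the first-entry decomposition is at most one. -/
lemma fent_mass (T j : ℕ) :
    ∑ n ∈ Finset.range T, ∑ a ∈ Finset.range (N'+1), M.fent i₀ N' n j a ≤ 1 := by
  induction T generalizing j with
  | zero => simp
  | succ T ih =>
    rw [Finset.sum_range_succ']
    by_cases hg : j = i₀ ∨ j ≤ N'
    · have h1 : ∀ n, ∑ a ∈ Finset.range (N'+1), M.fent i₀ N' (n+1) j a = 0 := by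
        intro n
        apply Finset.sum_eq_zero; intro a _
        rw [fent_succ, if_pos hg]
      simp only [h1, Finset.sum_const_zero, zero_add]
      calc ∑ a ∈ Finset.range (N'+1), M.fent i₀ N' 0 j a
          ≤ ∑ a ∈ Finset.range (N'+1), if a = j then 1 else 0 := by
            apply Finset.sum_le_sum; intro a _
            rw [fent_zero]
            split_ifs with h1 h2 <;> simp_all
        _ ≤ 1 := by
            rw [Finset.sum_ite_eq' (Finset.range (N'+1)) j (fun _ => (1:ℝ≥0∞))]
            split_ifs <;> simp
    · push_neg at hg
      have h0 : ∑ a ∈ Finset.range (N'+1), M.fent i₀ N' 0 j a = 0 := by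
        apply Finset.sum_eq_zero; intro a _
        rw [fent_zero, if_neg (by rintro ⟨-, h2, -⟩; omega)]
      rw [h0, add_zero]
      have hstep : ∀ n, ∑ a ∈ Finset.range (N'+1), M.fent i₀ N' (n+1) j a
          = ∑' k, M.p j k * ∑ a ∈ Finset.range (N'+1), M.fent i₀ N' n k a := by
        intro n
        calc ∑ a ∈ Finset.range (N'+1), M.fent i₀ N' (n+1) j a
            = ∑ a ∈ Finset.range (N'+1), ∑' k, M.p j k * M.fent i₀ N' n k a :=
              Finset.sum_congr rfl fun a _ => by
                rw [fent_succ, if_neg (not_or.mpr ⟨hg.1, by omega⟩)]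
          _ = ∑' k, ∑ a ∈ Finset.range (N'+1), M.p j k * M.fent i₀ N' n k a :=
              (Summable.tsum_finsetSum fun _ _ => ENNReal.summable).symm
          _ = ∑' k, M.p j k * ∑ a ∈ Finset.range (N'+1), M.fent i₀ N' n k a :=
              tsum_congr fun k => (Finset.mul_sum _ _ _).symm
      calc ∑ n ∈ Finset.range T, ∑ a ∈ Finset.range (N'+1), M.fent i₀ N' (n+1) j a
          = ∑ n ∈ Finset.range T, ∑' k, M.p j k * ∑ a ∈ Finset.range (N'+1), M.fent i₀ N' n k a :=
            Finset.sum_congr rfl fun n _ => hstep n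
        _ = ∑' k, ∑ n ∈ Finset.range T, M.p j k * ∑ a ∈ Finset.range (N'+1), M.fent i₀ N' n k a :=
            (Summable.tsum_finsetSum fun _ _ => ENNReal.summable).symm
        _ = ∑' k, M.p j k * ∑ n ∈ Finset.range T, ∑ a ∈ Finset.range (N'+1), M.fent i₀ N' n k a :=
            tsum_congr fun k => (Finset.mul_sum _ _ _).symm
        _ ≤ ∑' k, M.p j k * 1 := ENNReal.tsum_le_tsum fun k => mul_le_mul_right (ih k) _
        _ = 1 := M.p_row j

/-- first-entry decomposition of `rho`. -/
lemma rho_decomp (t j : ℕ) :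
    M.rho i₀ N' t j = ∑ n ∈ Finset.range (t+1), ∑ a ∈ Finset.range (N'+1),
      M.fent i₀ N' n j a * M.rho i₀ N' (t - n) a := by
  induction t generalizing j with
  | zero =>
    by_cases h : j = i₀
    · simp [h]
    · by_cases hj : j ≤ N'
      · rw [rho_zero _ _ _ _ h, if_pos hj]
        rw [Finset.sum_range_one]
        rw [Finset.sum_eq_single j]
        · rw [fent_zero, if_pos ⟨h, hj, rfl⟩, one_mul, rho_zero _ _ _ _ h, if_pos hj]
        · intro a _ ha; rw [fent_zero, if_neg (by tauto), zero_mul]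
        · intro hm; exact absurd (Finset.mem_range.mpr (by omega)) hm
      · rw [rho_zero _ _ _ _ h, if_neg hj, Finset.sum_range_one]
        symm; apply Finset.sum_eq_zero; intro a _
        rw [fent_zero, if_neg (by tauto), zero_mul]
  | succ t ih =>
    by_cases h : j = i₀
    · subst h
      rw [rho_start]
      symm; apply Finset.sum_eq_zero; intro n _
      apply Finset.sum_eq_zero; intro a _
      rw [fent_start, zero_mul]
    · by_cases hj : j ≤ N'
      · -- only the n = 0 term survives
        symm
        rw [Finset.sum_range_succ']
        have h1 : ∀ n, ∑ a ∈ Finset.range (N'+1), M.fent i₀ N' (n+1) j a * M.rho i₀ N' (t + 1 - (n+1)) a = 0 := by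
          intro n; apply Finset.sum_eq_zero; intro a _
          rw [fent_succ, if_pos (Or.inr hj), zero_mul]
        simp only [h1, Finset.sum_const_zero, zero_add, Nat.sub_zero]
        rw [Finset.sum_eq_single j]
        · rw [fent_zero, if_pos ⟨h, hj, rfl⟩, one_mul]
        · intro a _ ha; rw [fent_zero, if_neg (by tauto), zero_mul]
        · intro hm; exact absurd (Finset.mem_range.mpr (by omega)) hm
      · -- j outside A and not i₀
        rw [rho_succ _ _ _ _ _ h]
        symm
        rw [Finset.sum_range_succ']
        have h0 : ∑ a ∈ Finset.range (N'+1), M.fent i₀ N' 0 j a * M.rho i₀ N' (t + 1 - 0) a = 0 := by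
          apply Finset.sum_eq_zero; intro a _
          rw [fent_zero, if_neg (by tauto), zero_mul]
        rw [h0, add_zero]
        have hterm : ∀ n a, M.fent i₀ N' (n+1) j a = ∑' k, M.p j k * M.fent i₀ N' n k a := by
          intro n a; rw [fent_succ, if_neg (by tauto)]
        calc ∑ n ∈ Finset.range (t+1), ∑ a ∈ Finset.range (N'+1),
              M.fent i₀ N' (n+1) j a * M.rho i₀ N' (t + 1 - (n+1)) a
            = ∑ n ∈ Finset.range (t+1), ∑ a ∈ Finset.range (N'+1),
              ∑' k, M.p j k * M.fent i₀ N' n k a * M.rho i₀ N' (t - n) a := by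
              apply Finset.sum_congr rfl; intro n _
              apply Finset.sum_congr rfl; intro a _
              rw [hterm n a, show t + 1 - (n+1) = t - n from by omega, ENNReal.tsum_mul_right]
          _ = ∑' k, ∑ n ∈ Finset.range (t+1), ∑ a ∈ Finset.range (N'+1),
              M.p j k * M.fent i₀ N' n k a * M.rho i₀ N' (t - n) a := by
              rw [Summable.tsum_finsetSum fun _ _ => ENNReal.summable]
              apply Finset.sum_congr rfl; intro n _
              rw [Summable.tsum_finsetSum fun _ _ => ENNReal.summable]
          _ = ∑' k, M.p j k * ∑ n ∈ Finset.range (t+1), ∑ a ∈ Finset.range (N'+1),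
              M.fent i₀ N' n k a * M.rho i₀ N' (t - n) a := by
              apply tsum_congr; intro k
              rw [Finset.mul_sum]
              apply Finset.sum_congr rfl; intro n _
              rw [Finset.mul_sum]
              apply Finset.sum_congr rfl; intro a _
              ring
          _ = ∑' k, M.p j k * M.rho i₀ N' t k := tsum_congr fun k => by rw [← ih k]

/-- `Phi` from anywhere is dominated by its max over the finite set `A`. -/
lemma Phi_le_sup (T j : ℕ) :
    M.Phi i₀ N' T j ≤ (Finset.range (N'+1)).sup (fun a => M.Phi i₀ N' T a) := by
  set B := (Finset.range (N'+1)).sup (fun a => M.Phi i₀ N' T a) with hB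
  calc M.Phi i₀ N' T j
      = ∑ t ∈ Finset.range T, ∑ n ∈ Finset.range (t+1), ∑ a ∈ Finset.range (N'+1),
          M.fent i₀ N' n j a * M.rho i₀ N' (t - n) a :=
        Finset.sum_congr rfl fun t _ => M.rho_decomp i₀ N' t j
    _ = ∑ n ∈ Finset.range T, ∑ t ∈ Finset.Ico n T, ∑ a ∈ Finset.range (N'+1),
          M.fent i₀ N' n j a * M.rho i₀ N' (t - n) a := by
        apply Finset.sum_comm'
        intro t n
        simp only [Finset.mem_range, Finset.mem_Ico]
        omega
    _ = ∑ n ∈ Finset.range T, ∑ a ∈ Finset.range (N'+1), ∑ t ∈ Finset.Ico n T,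
          M.fent i₀ N' n j a * M.rho i₀ N' (t - n) a :=
        Finset.sum_congr rfl fun n _ => Finset.sum_comm
    _ = ∑ n ∈ Finset.range T, ∑ a ∈ Finset.range (N'+1),
          M.fent i₀ N' n j a * M.Phi i₀ N' (T - n) a := by
        apply Finset.sum_congr rfl; intro n _
        apply Finset.sum_congr rfl; intro a _
        rw [← Finset.mul_sum, Finset.sum_Ico_eq_sum_range]
        congr 1
        exact Finset.sum_congr rfl fun m _ => by rw [Nat.add_sub_cancel_left]
    _ ≤ ∑ n ∈ Finset.range T, ∑ a ∈ Finset.range (N'+1), M.fent i₀ N' n j a * B := by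
        apply Finset.sum_le_sum; intro n _
        apply Finset.sum_le_sum; intro a ha
        apply mul_le_mul_right
        exact le_trans (M.Phi_mono i₀ N' a (Nat.sub_le T n)) (Finset.le_sup ha)
    _ = (∑ n ∈ Finset.range T, ∑ a ∈ Finset.range (N'+1), M.fent i₀ N' n j a) * B := by
        rw [Finset.sum_mul]
        exact Finset.sum_congr rfl fun n _ => by rw [Finset.sum_mul]
    _ ≤ 1 * B := mul_le_mul_left (M.fent_mass i₀ N' T j) B
    _ = B := one_mul B
lemma step_le_one (n j k : ℕ) : M.step n j k ≤ 1 := by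
  calc M.step n j k ≤ ∑' k, M.step n j k := ENNReal.le_tsum k
    _ = 1 := M.step_sum n j

/-- the key uniform bound on expected number of alive visits to `A = {0,…,N'}`. -/
lemma phi_bounded (hN : i₀ ≤ N') (hirr : ∀ a, ∃ n, 0 < M.step n a i₀) :
    ∃ C : ℝ≥0∞, C ≠ ⊤ ∧ ∀ j, M.phi i₀ N' j ≤ C := by
  classical
  set A := Finset.range (N'+1) with hA
  have hAne : A.Nonempty := Finset.nonempty_range_iff.mpr (Nat.succ_ne_zero _)
  set na : ℕ → ℕ := fun a => (hirr a).choose with hna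
  set m : ℕ := A.sup na with hm
  set d : ℝ≥0∞ := A.inf' hAne (fun a => M.step (na a) a i₀) with hd
  have hdpos : 0 < d := by
    rw [hd, Finset.lt_inf'_iff]
    exact fun a _ => (hirr a).choose_spec
  have hd1 : d ≤ 1 := by
    have hi₀A : i₀ ∈ A := Finset.mem_range.mpr (by omega)
    exact le_trans (Finset.inf'_le _ hi₀A) (M.step_le_one _ _ _)
  have hdtop : d ≠ ⊤ := ne_top_of_le_ne_top ENNReal.one_ne_top hd1
  -- survival from A for m+1 steps loses mass at least d
  have hsurv : ∀ a ∈ A, M.surv i₀ (m+1) a + d ≤ 1 := by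
    intro a ha
    have h1 : d ≤ M.step (na a) a i₀ := Finset.inf'_le _ ha
    have h2 : M.step (na a) a i₀ ≤ ∑ t ∈ Finset.range (na a + 1), M.hitAt i₀ t a :=
      M.step_le_hit i₀ (na a) a
    have h3 : M.surv i₀ (m+1) a ≤ M.surv i₀ (na a) a :=
      M.surv_anti i₀ a (le_trans (Finset.le_sup ha) (Nat.le_succ m))
    calc M.surv i₀ (m+1) a + d ≤ M.surv i₀ (na a) a + ∑ t ∈ Finset.range (na a + 1), M.hitAt i₀ t a :=
          add_le_add h3 (le_trans h1 h2)
      _ = 1 := M.surv_add_hit i₀ (na a) a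
  set C : ℝ≥0∞ := (m+1 : ℕ) * d⁻¹ with hC
  have hCtop : C ≠ ⊤ := by
    rw [hC]
    exact ENNReal.mul_ne_top (ENNReal.natCast_ne_top _) (ENNReal.inv_ne_top.mpr hdpos.ne')
  refine ⟨C, hCtop, ?_⟩
  -- main induction: sup over A of Phi (q*(m+1)) ≤ C
  have hmain : ∀ q : ℕ, A.sup (fun a => M.Phi i₀ N' (q*(m+1)) a) ≤ C := by
    intro q
    induction q with
    | zero => simp [Phi]
    | succ q ih =>
      rw [Finset.sup_le_iff]
      intro a ha
      have hsplit : (q+1)*(m+1) = (m+1) + q*(m+1) := by ring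
      rw [hsplit, M.Phi_block i₀ N' (q*(m+1)) (m+1) a]
      have h1 : M.Phi i₀ N' (m+1) a ≤ (m+1 : ℕ) := M.Phi_le i₀ N' (m+1) a
      have h2 : ∑' l, M.taboo i₀ (m+1) a l * M.Phi i₀ N' (q*(m+1)) l
          ≤ M.surv i₀ (m+1) a * C := by
        calc ∑' l, M.taboo i₀ (m+1) a l * M.Phi i₀ N' (q*(m+1)) l
            ≤ ∑' l, M.taboo i₀ (m+1) a l * C :=
              ENNReal.tsum_le_tsum fun l =>
                mul_le_mul_right (le_trans (M.Phi_le_sup i₀ N' (q*(m+1)) l) ih) _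
          _ = M.surv i₀ (m+1) a * C := by rw [ENNReal.tsum_mul_right, M.taboo_sum]
      calc M.Phi i₀ N' (m+1) a + ∑' l, M.taboo i₀ (m+1) a l * M.Phi i₀ N' (q*(m+1)) l
          ≤ (m+1 : ℕ) + M.surv i₀ (m+1) a * C := add_le_add h1 h2
        _ ≤ C := by
            -- C = (m+1) * d⁻¹ ≥ (m+1) * d⁻¹ * (surv + d) = surv * C + (m+1)
            have hinv : d⁻¹ * d = 1 := ENNReal.inv_mul_cancel hdpos.ne' hdtop
            calc ((m+1 : ℕ) : ℝ≥0∞) + M.surv i₀ (m+1) a * C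
                = (m+1 : ℕ) * d⁻¹ * d + M.surv i₀ (m+1) a * ((m+1 : ℕ) * d⁻¹) := by
                  rw [mul_assoc, hinv, mul_one, hC]
              _ = (m+1 : ℕ) * d⁻¹ * (M.surv i₀ (m+1) a + d) := by ring
              _ ≤ (m+1 : ℕ) * d⁻¹ * 1 := mul_le_mul_right (hsurv a ha) _
              _ = C := by rw [mul_one, hC]
  -- conclude
  intro j
  apply ENNReal.tsum_le_of_sum_range_le
  intro T
  calc M.Phi i₀ N' T j ≤ M.Phi i₀ N' (T*(m+1)) j :=
        M.Phi_mono i₀ N' j (Nat.le_mul_of_pos_right T (Nat.succ_pos m))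
    _ ≤ A.sup (fun a => M.Phi i₀ N' (T*(m+1)) a) := M.Phi_le_sup i₀ N' (T*(m+1)) j
    _ ≤ C := hmain T
lemma phi_rec (j : ℕ) (h : j ≠ i₀) :
    M.phi i₀ N' j = (if j ≤ N' then 1 else 0) + ∑' k, M.p j k * M.phi i₀ N' k := by
  calc M.phi i₀ N' j = M.rho i₀ N' 0 j + ∑' n, M.rho i₀ N' (n+1) j :=
        tsum_eq_zero_add' ENNReal.summable
    _ = (if j ≤ N' then 1 else 0) + ∑' n, ∑' k, M.p j k * M.rho i₀ N' n k := by
        rw [M.rho_zero i₀ N' j h]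
        congr 1
        exact tsum_congr fun n => M.rho_succ i₀ N' n j h
    _ = (if j ≤ N' then 1 else 0) + ∑' k, M.p j k * M.phi i₀ N' k := by
        congr 1
        rw [ENNReal.tsum_comm]
        exact tsum_congr fun k => ENNReal.tsum_mul_left

lemma pk_sum (j : ℕ) (hf : M.DriftFinite j) :
    ∑' k, M.p j k * (k : ℝ≥0∞) = ENNReal.ofReal (j + M.drift j) := by
  have hptop : ∀ k, M.p j k ≠ ⊤ := fun k => ne_top_of_le_ne_top ENNReal.one_ne_top (M.p_le_one j k)
  have h1 : Summable fun k => (M.p j k).toReal :=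
    ENNReal.summable_toReal (by rw [M.row_sum j]; exact ENNReal.one_ne_top)
  have hsum1 : ∑' k, (M.p j k).toReal = 1 := by
    rw [← ENNReal.tsum_toReal_eq hptop, M.row_sum j, ENNReal.toReal_one]
  have h3 : Summable fun k => (M.p j k).toReal * (k : ℝ) :=
    (hf.add (h1.mul_right (j : ℝ))).congr fun k => by ring
  have hsum3 : ∑' k, (M.p j k).toReal * (k : ℝ) = M.drift j + j := by
    calc ∑' k, (M.p j k).toReal * (k : ℝ)
        = ∑' k, ((M.p j k).toReal * ((k : ℝ) - j) + (M.p j k).toReal * (j : ℝ)) :=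
          tsum_congr fun k => by ring
      _ = M.drift j + (∑' k, (M.p j k).toReal) * (j : ℝ) := by
          rw [Summable.tsum_add hf (h1.mul_right (j : ℝ)), drift, tsum_mul_right]
      _ = M.drift j + j := by rw [hsum1, one_mul]
  calc ∑' k, M.p j k * (k : ℝ≥0∞)
      = ∑' k, ENNReal.ofReal ((M.p j k).toReal * (k : ℝ)) :=
        tsum_congr fun k => by
          rw [ENNReal.ofReal_mul ENNReal.toReal_nonneg, ENNReal.ofReal_toReal (hptop k),
            ENNReal.ofReal_natCast]
    _ = ENNReal.ofReal (∑' k, (M.p j k).toReal * (k : ℝ)) :=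
        (ENNReal.ofReal_tsum_of_nonneg (fun k => mul_nonneg ENNReal.toReal_nonneg (Nat.cast_nonneg k)) h3).symm
    _ = ENNReal.ofReal (j + M.drift j) := by rw [hsum3, add_comm]

lemma exists_eps (hls : Filter.limsup M.drift Filter.atTop < 0) :
    ∃ ε : ℝ, 0 < ε ∧ ε ≤ 1 ∧ ∃ N : ℕ, 1 ≤ N ∧ ∀ j, N ≤ j → M.drift j ≤ -ε := by
  rw [Filter.limsup_eq] at hls
  set S := {a : ℝ | ∀ᶠ j in Filter.atTop, M.drift j ≤ a} with hS
  have hne : S.Nonempty := by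
    by_contra h
    rw [Set.not_nonempty_iff_eq_empty] at h
    rw [h, Real.sInf_empty] at hls
    linarith
  have hbdd : BddBelow S := by
    by_contra h
    rw [Real.sInf_of_not_bddBelow h] at hls
    linarith
  obtain ⟨a, haS, ha0⟩ := (csInf_lt_iff hbdd hne).mp hls
  obtain ⟨N₀, hN₀⟩ := Filter.eventually_atTop.mp haS
  refine ⟨min (-a) 1, by simp [ha0], min_le_right _ _, max N₀ 1, le_max_right _ _, ?_⟩
  intro j hj
  have h1 : M.drift j ≤ a := hN₀ j (le_trans (le_max_left _ _) hj)
  have h2 : min (-a) 1 ≤ -a := min_le_left _ _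
  linarith

/-- Construction of the Lyapunov supersolution. -/
lemma exists_V (i₀ : ℕ) (hirr : ∀ a, ∃ n, 0 < M.step n a i₀)
    (hfin : ∀ i, M.DriftFinite i)
    (hlimsup : Filter.limsup M.drift Filter.atTop < 0) :
    ∃ V : ℕ → ℝ≥0∞, (∀ j, V j ≠ ⊤) ∧ (1 ≤ V i₀) ∧ (∀ j, j ≠ i₀ → 1 + ∑' k, M.p j k * V k ≤ V j) ∧
      (∑' k, M.p i₀ k * V k ≠ ⊤) := by
  classical
  obtain ⟨ε, hε0, hε1, N, hN1, hdr⟩ := M.exists_eps hlimsup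
  set N' : ℕ := max N i₀ with hN'
  obtain ⟨C, hCtop, hphiC⟩ := M.phi_bounded i₀ N' (le_max_right _ _) hirr
  set Γ : ℝ := ((Finset.range (N'+1)).sup' (Finset.nonempty_range_iff.mpr (Nat.succ_ne_zero _))
      (fun j => M.drift j)) ⊔ 0 with hΓ
  have hΓ0 : 0 ≤ Γ := le_sup_right
  have hΓdr : ∀ j, j ≤ N' → M.drift j ≤ Γ := by
    intro j hj
    exact le_trans (Finset.le_sup' _ (Finset.mem_range.mpr (by omega))) le_sup_left
  set c : ℝ≥0∞ := ENNReal.ofReal ε⁻¹ with hc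
  have hctop : c ≠ ⊤ := ENNReal.ofReal_ne_top
  have hc1 : 1 ≤ c := by
    rw [hc, ← ENNReal.ofReal_one]
    exact ENNReal.ofReal_le_ofReal ((one_le_inv₀ hε0).mpr hε1)
  set K : ℝ≥0∞ := 1 + c * ENNReal.ofReal Γ with hK
  have hKtop : K ≠ ⊤ := by
    rw [hK]
    exact ENNReal.add_ne_top.mpr ⟨ENNReal.one_ne_top, ENNReal.mul_ne_top hctop ENNReal.ofReal_ne_top⟩
  set V : ℕ → ℝ≥0∞ := fun j => c * ((j : ℝ≥0∞) + 1) + K * M.phi i₀ N' j with hV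
  have hsplit : ∀ j, ∑' k, M.p j k * V k
      = c * (∑' k, M.p j k * ((k : ℝ≥0∞) + 1)) + K * ∑' k, M.p j k * M.phi i₀ N' k := by
    intro j
    rw [← ENNReal.tsum_mul_left, ← ENNReal.tsum_mul_left, ← ENNReal.tsum_add]
    exact tsum_congr fun k => by rw [hV]; ring
  have hA1 : ∀ j, ∑' k, M.p j k * ((k : ℝ≥0∞) + 1) = ENNReal.ofReal (j + M.drift j) + 1 := by
    intro j
    calc ∑' k, M.p j k * ((k : ℝ≥0∞) + 1) = ∑' k, (M.p j k * (k : ℝ≥0∞) + M.p j k * 1) :=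
          tsum_congr fun k => by ring
      _ = ∑' k, M.p j k * (k : ℝ≥0∞) + ∑' k, M.p j k * 1 := ENNReal.tsum_add
      _ = ENNReal.ofReal (j + M.drift j) + 1 := by rw [M.pk_sum j (hfin j), M.p_row j]
  refine ⟨V, ?_, ?_, ?_, ?_⟩
  · intro j
    rw [hV]
    apply ENNReal.add_ne_top.mpr
    constructor
    · exact ENNReal.mul_ne_top hctop (ENNReal.add_ne_top.mpr ⟨ENNReal.natCast_ne_top j, ENNReal.one_ne_top⟩)
    · exact ENNReal.mul_ne_top hKtop (ne_top_of_le_ne_top hCtop (hphiC j))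
  · calc (1:ℝ≥0∞) ≤ c := hc1
      _ ≤ c * ((i₀ : ℝ≥0∞) + 1) := le_mul_of_one_le_right (zero_le : 0 ≤ c) (by simp)
      _ ≤ V i₀ := le_self_add
  · intro j hj
    rw [hsplit j, hA1 j]
    by_cases hjN : j ≤ N'
    · -- inside A
      have hrec : M.phi i₀ N' j = 1 + ∑' k, M.p j k * M.phi i₀ N' k := by
        rw [M.phi_rec i₀ N' j hj, if_pos hjN]
      rw [← ENNReal.add_le_add_iff_right hKtop]
      have hre : K * M.phi i₀ N' j = K * ∑' k, M.p j k * M.phi i₀ N' k + K := by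
        rw [hrec, mul_add, mul_one, add_comm]
      have hdj : ENNReal.ofReal ((j:ℝ) + M.drift j) ≤ (j : ℝ≥0∞) + ENNReal.ofReal Γ := by
        calc ENNReal.ofReal ((j:ℝ) + M.drift j) ≤ ENNReal.ofReal ((j:ℝ) + Γ) :=
              ENNReal.ofReal_le_ofReal (by have := hΓdr j hjN; linarith)
          _ = ENNReal.ofReal (j:ℝ) + ENNReal.ofReal Γ := ENNReal.ofReal_add (Nat.cast_nonneg j) hΓ0
          _ = (j : ℝ≥0∞) + ENNReal.ofReal Γ := by rw [ENNReal.ofReal_natCast]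
      calc 1 + (c * (ENNReal.ofReal ((j:ℝ) + M.drift j) + 1) + K * ∑' k, M.p j k * M.phi i₀ N' k) + K
          = 1 + c * (ENNReal.ofReal ((j:ℝ) + M.drift j) + 1) + K * M.phi i₀ N' j := by
            rw [hre]; ring
        _ ≤ 1 + c * ((j : ℝ≥0∞) + ENNReal.ofReal Γ + 1) + K * M.phi i₀ N' j := by
            gcongr
        _ = c * ((j : ℝ≥0∞) + 1) + K * M.phi i₀ N' j + K := by
            rw [hK]; ring
        _ = V j + K := by rw [hV]
    · -- outside A: strict drift
      have hNleN' : N ≤ N' := le_max_left _ _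
      have hdrj : M.drift j ≤ -ε := hdr j (by omega)
      have hj1 : (1:ℝ) ≤ (j:ℝ) := by
        have : (1:ℕ) ≤ j := by omega
        exact_mod_cast this
      have hjε : ε ≤ (j:ℝ) := by linarith
      have hrecout : M.phi i₀ N' j = ∑' k, M.p j k * M.phi i₀ N' k := by
        rw [M.phi_rec i₀ N' j hj, if_neg hjN, zero_add]
      have heq : 1 + ε⁻¹ * ((j:ℝ) - ε) = ε⁻¹ * (j:ℝ) := by
        rw [mul_sub, inv_mul_cancel₀ hε0.ne']; ring
      calc 1 + (c * (ENNReal.ofReal ((j:ℝ) + M.drift j) + 1) + K * ∑' k, M.p j k * M.phi i₀ N' k)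
          = (1 + c + c * ENNReal.ofReal ((j:ℝ) + M.drift j)) + K * ∑' k, M.p j k * M.phi i₀ N' k := by
            ring
        _ ≤ (1 + c + c * ENNReal.ofReal ((j:ℝ) - ε)) + K * ∑' k, M.p j k * M.phi i₀ N' k := by
            gcongr
            linarith
        _ = (c + ENNReal.ofReal (1 + ε⁻¹ * ((j:ℝ) - ε))) + K * ∑' k, M.p j k * M.phi i₀ N' k := by
            rw [hc, ← ENNReal.ofReal_mul (inv_nonneg.mpr hε0.le),
              ENNReal.ofReal_add (by norm_num) (mul_nonneg (inv_nonneg.mpr hε0.le) (by linarith)),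
              ENNReal.ofReal_one]
            ring
        _ = (c + ENNReal.ofReal (ε⁻¹ * (j:ℝ))) + K * ∑' k, M.p j k * M.phi i₀ N' k := by
            rw [heq]
        _ = c * ((j : ℝ≥0∞) + 1) + K * ∑' k, M.p j k * M.phi i₀ N' k := by
            rw [mul_add, mul_one, hc, ← ENNReal.ofReal_natCast j,
              ← ENNReal.ofReal_mul (inv_nonneg.mpr hε0.le)]
            ring
        _ = V j := by rw [hV, ← hrecout]
  · rw [hsplit i₀, hA1 i₀]
    have hS : ∑' k, M.p i₀ k * M.phi i₀ N' k ≤ C := by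
      calc ∑' k, M.p i₀ k * M.phi i₀ N' k ≤ ∑' k, M.p i₀ k * C :=
            ENNReal.tsum_le_tsum fun k => mul_le_mul_right (hphiC k) _
        _ = C := by rw [ENNReal.tsum_mul_right, M.row_sum i₀, one_mul]
    apply ENNReal.add_ne_top.mpr
    constructor
    · exact ENNReal.mul_ne_top hctop (ENNReal.add_ne_top.mpr ⟨ENNReal.ofReal_ne_top, ENNReal.one_ne_top⟩)
    · exact ENNReal.mul_ne_top hKtop (ne_top_of_le_ne_top hCtop hS)
section Main
variable {V : ℕ → ℝ≥0∞}

lemma Ssum_le (hV1 : 1 ≤ V i₀) (hkey : ∀ j, j ≠ i₀ → 1 + ∑' k, M.p j k * V k ≤ V j) :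
    ∀ m j, ∑ n ∈ Finset.range m, ((n : ℝ≥0∞) + 1) * M.hitAt i₀ n j ≤ V j := by
  intro m
  induction m with
  | zero => intro j; simp
  | succ m ih =>
    intro j
    by_cases h : j = i₀
    · subst h
      rw [Finset.sum_range_succ']
      have hz : ∀ n, ((n+1 : ℕ) : ℝ≥0∞) * 0 = 0 := by simp
      simp only [hitAt_succ_self, mul_zero, Finset.sum_const_zero, zero_add, hitAt_zero, if_pos rfl]
      simpa using hV1
    · rw [Finset.sum_range_succ']
      simp only [hitAt_zero, if_neg h, mul_zero, add_zero]
      have hstep : ∀ n : ℕ, (((n+1 : ℕ) : ℝ≥0∞) + 1) * M.hitAt i₀ (n+1) j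
          = ∑' k, M.p j k * ((((n : ℕ) : ℝ≥0∞) + 1 + 1) * M.hitAt i₀ n k) := by
        intro n
        rw [M.hitAt_succ_ne i₀ n j h, ← ENNReal.tsum_mul_left]
        apply tsum_congr; intro k
        push_cast
        ring
      calc ∑ n ∈ Finset.range m, (((n+1 : ℕ) : ℝ≥0∞) + 1) * M.hitAt i₀ (n+1) j
          = ∑ n ∈ Finset.range m, ∑' k, M.p j k * ((((n : ℕ) : ℝ≥0∞) + 1 + 1) * M.hitAt i₀ n k) :=
            Finset.sum_congr rfl fun n _ => hstep n
        _ = ∑' k, ∑ n ∈ Finset.range m, M.p j k * ((((n : ℕ) : ℝ≥0∞) + 1 + 1) * M.hitAt i₀ n k) :=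
            (Summable.tsum_finsetSum fun _ _ => ENNReal.summable).symm
        _ = ∑' k, M.p j k * (∑ n ∈ Finset.range m, ((n : ℝ≥0∞) + 1) * M.hitAt i₀ n k
              + ∑ n ∈ Finset.range m, M.hitAt i₀ n k) := by
            apply tsum_congr; intro k
            rw [← Finset.sum_add_distrib, Finset.mul_sum]
            apply Finset.sum_congr rfl; intro n _
            ring
        _ ≤ ∑' k, M.p j k * (V k + 1) :=
            ENNReal.tsum_le_tsum fun k =>
              mul_le_mul_right (add_le_add (ih k) (M.hit_le_one i₀ m k)) _
        _ = ∑' k, M.p j k * V k + 1 := by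
            rw [show (fun k => M.p j k * (V k + 1)) = fun k => M.p j k * V k + M.p j k * 1 from
              funext fun k => by ring, ENNReal.tsum_add, M.p_row j]
        _ ≤ V j := by rw [add_comm]; exact hkey j h

lemma Tsum_le (hkey : ∀ j, j ≠ i₀ → 1 + ∑' k, M.p j k * V k ≤ V j) :
    ∀ m j, ∑ n ∈ Finset.range m, M.surv i₀ n j ≤ V j := by
  intro m
  induction m with
  | zero => intro j; simp
  | succ m ih =>
    intro j
    by_cases h : j = i₀
    · subst h; simp
    · rw [Finset.sum_range_succ']
      simp only [surv_zero, if_neg h]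
      calc ∑ n ∈ Finset.range m, M.surv i₀ (n+1) j + 1
          = ∑ n ∈ Finset.range m, ∑' k, M.p j k * M.surv i₀ n k + 1 := by
            congr 1
            exact Finset.sum_congr rfl fun n _ => M.surv_succ_ne i₀ n j h
        _ = ∑' k, M.p j k * ∑ n ∈ Finset.range m, M.surv i₀ n k + 1 := by
            congr 1
            rw [← Summable.tsum_finsetSum fun _ _ => ENNReal.summable]
            exact tsum_congr fun k => (Finset.mul_sum _ _ _).symm
        _ ≤ ∑' k, M.p j k * V k + 1 :=
            add_le_add_left (ENNReal.tsum_le_tsum fun k => mul_le_mul_right (ih k) _) 1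
        _ ≤ V j := by rw [add_comm]; exact hkey j h

lemma hit_total (hVfin : ∀ j, V j ≠ ⊤) (hkey : ∀ j, j ≠ i₀ → 1 + ∑' k, M.p j k * V k ≤ V j)
    (j : ℕ) : ∑' n, M.hitAt i₀ n j = 1 := by
  have hle : ∑' n, M.hitAt i₀ n j ≤ 1 :=
    ENNReal.tsum_le_of_sum_range_le fun T => M.hit_le_one i₀ T j
  refine le_antisymm hle ?_
  -- the infimum of the survival probabilities is zero
  have hsurvsum : ∑' n, M.surv i₀ n j ≤ V j :=
    ENNReal.tsum_le_of_sum_range_le fun T => M.Tsum_le i₀ hkey T j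
  have hinf : ⨅ n, M.surv i₀ n j = 0 := by
    by_contra hne
    set a := ⨅ n, M.surv i₀ n j with ha
    have ha0 : a ≠ 0 := hne
    have hatop : a ≠ ⊤ :=
      ne_top_of_le_ne_top ENNReal.one_ne_top (le_trans (iInf_le _ 0) (M.surv_le_one i₀ 0 j))
    have hdivtop : V j / a ≠ ⊤ := by
      intro h
      rcases ENNReal.div_eq_top.mp h with ⟨-, h2⟩ | ⟨h1, -⟩
      · exact ha0 h2
      · exact hVfin j h1
    obtain ⟨T, hT⟩ := ENNReal.exists_nat_gt hdivtop
    have hTa : V j < (T : ℝ≥0∞) * a := by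
      exact (ENNReal.div_lt_iff (Or.inl ha0) (Or.inl hatop)).mp hT
    have hcon : (T : ℝ≥0∞) * a ≤ V j := by
      calc (T : ℝ≥0∞) * a = ∑ n ∈ Finset.range T, a := by
            rw [Finset.sum_const, Finset.card_range, nsmul_eq_mul]
        _ ≤ ∑ n ∈ Finset.range T, M.surv i₀ n j :=
            Finset.sum_le_sum fun n _ => iInf_le _ n
        _ ≤ V j := M.Tsum_le i₀ hkey T j
    exact absurd hTa (not_lt.mpr hcon)
  have h1 : ∀ n, (1 : ℝ≥0∞) ≤ ∑' t, M.hitAt i₀ t j + M.surv i₀ n j := by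
    intro n
    rw [← M.surv_add_hit i₀ n j, add_comm (M.surv i₀ n j)]
    exact add_le_add (ENNReal.sum_le_tsum _) (le_refl _)
  calc (1 : ℝ≥0∞) ≤ ⨅ n, (∑' t, M.hitAt i₀ t j + M.surv i₀ n j) := le_iInf h1
    _ = ∑' t, M.hitAt i₀ t j + ⨅ n, M.surv i₀ n j := by
        rw [ENNReal.add_iInf]
    _ = ∑' t, M.hitAt i₀ t j := by rw [hinf, add_zero]

end Main

/-- the two conclusions for a fixed state. -/
lemma goal_at (i₀ : ℕ) (hirr : ∀ a, ∃ n, 0 < M.step n a i₀)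
    (hfin : ∀ i, M.DriftFinite i)
    (hlimsup : Filter.limsup M.drift Filter.atTop < 0) :
    (∑' n, M.firstReturn i₀ n = 1) ∧ (∑' n : ℕ, ((n : ℝ≥0∞) + 1) * M.firstReturn i₀ n < ⊤) := by
  obtain ⟨V, hVfin, hV1, hkey, hVi₀⟩ := M.exists_V i₀ hirr hfin hlimsup
  constructor
  · calc ∑' n, M.firstReturn i₀ n = ∑' n, ∑' k, M.p i₀ k * M.hitAt i₀ n k := rfl
      _ = ∑' k, ∑' n, M.p i₀ k * M.hitAt i₀ n k := ENNReal.tsum_comm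
      _ = ∑' k, M.p i₀ k * ∑' n, M.hitAt i₀ n k := tsum_congr fun k => ENNReal.tsum_mul_left
      _ = ∑' k, M.p i₀ k := tsum_congr fun k => by
            rw [M.hit_total i₀ hVfin hkey k, mul_one]
      _ = 1 := M.row_sum i₀
  · have hG : ∀ k, ∑' n : ℕ, ((n : ℝ≥0∞) + 1) * M.hitAt i₀ n k ≤ V k := fun k =>
      ENNReal.tsum_le_of_sum_range_le fun T => M.Ssum_le i₀ hV1 hkey T k
    calc ∑' n : ℕ, ((n : ℝ≥0∞) + 1) * M.firstReturn i₀ n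
        = ∑' n : ℕ, ∑' k, M.p i₀ k * (((n : ℝ≥0∞) + 1) * M.hitAt i₀ n k) := by
          apply tsum_congr; intro n
          rw [firstReturn, ← ENNReal.tsum_mul_left]
          exact tsum_congr fun k => by ring
      _ = ∑' k, M.p i₀ k * ∑' n : ℕ, ((n : ℝ≥0∞) + 1) * M.hitAt i₀ n k := by
          rw [ENNReal.tsum_comm]
          exact tsum_congr fun k => ENNReal.tsum_mul_left
      _ ≤ ∑' k, M.p i₀ k * V k := ENNReal.tsum_le_tsum fun k => mul_le_mul_right (hG k) _
      _ < ⊤ := lt_top_iff_ne_top.mpr hVi₀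
end MarkovChain

/-- Pakes' Lemma: an irreducible chain with finite mean drifts and
`limsup_i γ_i < 0` is positive recurrent. -/
theorem stmt1 (M : MarkovChain) (hirr : M.Irreducible)
    (hfin : ∀ i, M.DriftFinite i)
    (hlimsup : Filter.limsup M.drift Filter.atTop < 0) :
    M.PositiveRecurrent := by
  constructor
  · intro i
    exact (M.goal_at i (fun a => hirr a i) hfin hlimsup).1
  · intro i
    exact (M.goal_at i (fun a => hirr a i) hfin hlimsup).2
end

section
/- If a Markov chain on the nonnegative integers is downward uniformly bounded with bound k (i.e., p_{ij} = 0 whenever i - j > k), then Kaplan's condition holds with B = k(k+1)/2: for every i and every z in [0,1), (z^i - sum_j p_{ij} z^j)/(1 - z) >= -k(k+1)/2. -/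
open scoped ENNReal BigOperators
open Filter

/-- a downward uniformly bounded chain satisfies Kaplan's condition
with `B = k (k + 1) / 2`. -/
theorem stmt3 (M : MarkovChain) (k : ℕ) (hdb : M.DownwardBounded k) :
    ∀ i : ℕ, ∀ z : ℝ, 0 ≤ z → z < 1 →
      -((k : ℝ) * (k + 1) / 2) ≤ (z ^ i - ∑' j, (M.p i j).toReal * z ^ j) / (1 - z) := by
  intro i z hz0 hz1
  set m := i - k with hm
  have hz1' : z ≤ 1 := hz1.le
  have hpt : ∀ j, M.p i j ≠ ⊤ := fun j =>
    ne_top_of_le_ne_top (by simp) (le_of_le_of_eq (ENNReal.le_tsum j) (M.row_sum i))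
  have hsum1 : ∑' j, (M.p i j).toReal = 1 := by
    rw [← ENNReal.tsum_toReal_eq hpt, M.row_sum i]; simp
  have hsummt : Summable fun j => (M.p i j).toReal :=
    ENNReal.summable_toReal (by rw [M.row_sum i]; exact ENNReal.one_ne_top)
  have hsumf : Summable fun j => (M.p i j).toReal * z ^ j := by
    apply Summable.of_nonneg_of_le (fun j => by positivity) (fun j => ?_) hsummt
    have h1 : z ^ j ≤ 1 := pow_le_one₀ hz0 hz1'
    nlinarith [ENNReal.toReal_nonneg (a := M.p i j), pow_nonneg hz0 j]
  have hS : (∑' j, (M.p i j).toReal * z ^ j) ≤ z ^ m := by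
    calc ∑' j, (M.p i j).toReal * z ^ j ≤ ∑' j, (M.p i j).toReal * z ^ m := by
          apply Summable.tsum_le_tsum _ hsumf (hsummt.mul_right _)
          intro j
          by_cases hj : j < m
          · have h0 : M.p i j = 0 := hdb i j (by omega)
            simp [h0]
          · have hle : z ^ j ≤ z ^ m := pow_le_pow_of_le_one hz0 hz1' (by omega)
            exact mul_le_mul_of_nonneg_left hle ENNReal.toReal_nonneg
      _ = z ^ m := by rw [tsum_mul_right, hsum1, one_mul]
  have h1z : 0 < 1 - z := by linarith
  rw [le_div_iff₀ h1z]
  have aux : ∀ n : ℕ, 1 - z ^ n ≤ n * (1 - z) := by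
    intro n
    induction n with
    | zero => simp
    | succ n ih =>
      have hzn : z ^ n ≤ 1 := pow_le_one₀ hz0 hz1'
      push_cast
      rw [pow_succ]
      nlinarith [mul_le_mul_of_nonneg_left ih hz0, Nat.cast_nonneg (α := ℝ) n,
        pow_nonneg hz0 n]
  obtain ⟨r, hik, hrk⟩ : ∃ r : ℕ, i = m + r ∧ r ≤ k := ⟨min i k, by omega, min_le_right i k⟩
  have key : -((r : ℕ) : ℝ) * (1 - z) ≤ z ^ i - z ^ m := by
    have h1 : z ^ i = z ^ m * z ^ r := by rw [hik, pow_add]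
    have h2 : 1 - z ^ r ≤ ((r : ℕ) : ℝ) * (1 - z) := aux _
    have hzm : z ^ m ≤ 1 := pow_le_one₀ hz0 hz1'
    have hzm0 : 0 ≤ z ^ m := pow_nonneg hz0 m
    have hzk1 : z ^ r ≤ 1 := pow_le_one₀ hz0 hz1'
    nlinarith
  have hkk : ((r : ℕ) : ℝ) ≤ k * (k + 1) / 2 := by
    rcases Nat.eq_zero_or_pos k with hk | hk
    · have hr0 : r = 0 := by omega
      simp [hr0, hk]
    · have h1 : ((r : ℕ) : ℝ) ≤ k := by exact_mod_cast hrk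
      have h2 : (1 : ℝ) ≤ k := by exact_mod_cast hk
      nlinarith
  nlinarith [hS, key]
end

section
/- The random walk on the nonnegative integers with p_{i,j} = 1/(2k+1) for all j with |i-j| <= k when i >= k, and p_{i,i+1} = 1 for i < k, is null recurrent. -/
open scoped ENNReal BigOperators
open Filter

namespace Stmt5
open Finset Topology

noncomputable def q (k : ℕ) : ℝ≥0∞ := (2 * (k : ℝ≥0∞) + 1)⁻¹

lemma den_ne_zero (k : ℕ) : (2 * (k : ℝ≥0∞) + 1) ≠ 0 := by
  simp

lemma den_ne_top (k : ℕ) : (2 * (k : ℝ≥0∞) + 1) ≠ ⊤ := by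
  refine ENNReal.add_ne_top.2 ⟨ENNReal.mul_ne_top (by simp) (ENNReal.natCast_ne_top k), ENNReal.one_ne_top⟩

lemma mul_q (k : ℕ) : (2 * (k : ℝ≥0∞) + 1) * q k = 1 :=
  ENNReal.mul_inv_cancel (den_ne_zero k) (den_ne_top k)

lemma q_ne_zero (k : ℕ) : q k ≠ 0 := by
  simp [q, den_ne_top k]

lemma q_ne_top (k : ℕ) : q k ≠ ⊤ := by
  simp [q]

lemma q_le_one (k : ℕ) : q k ≤ 1 := by
  rw [q]
  refine ENNReal.inv_le_one.2 ?_
  exact le_add_self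

section walk

variable {M : MarkovChain} {k : ℕ}

lemma card_Icc' (x : ℕ) (hx : k ≤ x) : (Finset.Icc (x-k) (x+k)).card = 2*k+1 := by
  rw [Nat.card_Icc]; omega

lemma mem_Icc_iff {x l : ℕ} (hx : k ≤ x) :
    l ∈ Finset.Icc (x-k) (x+k) ↔ |(x : ℤ) - l| ≤ (k : ℤ) := by
  rw [Finset.mem_Icc, abs_le]
  omega

lemma tsum_walk (h_walk : ∀ i j : ℕ, k ≤ i →
      M.p i j = if |(i : ℤ) - j| ≤ (k : ℤ) then (2 * (k : ℝ≥0∞) + 1)⁻¹ else 0)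
    {x : ℕ} (hx : k ≤ x) (f : ℕ → ℝ≥0∞) :
    ∑' l, M.p x l * f l = ∑ l ∈ Finset.Icc (x-k) (x+k), q k * f l := by
  rw [tsum_eq_sum (s := Finset.Icc (x-k) (x+k)) ?_]
  · refine Finset.sum_congr rfl fun l hl => ?_
    rw [h_walk x l hx, if_pos ((mem_Icc_iff hx).1 hl)]; rfl
  · intro l hl
    rw [h_walk x l hx, if_neg (fun h => hl ((mem_Icc_iff hx).2 h)), zero_mul]

lemma p_eq_q (h_walk : ∀ i j : ℕ, k ≤ i →
      M.p i j = if |(i : ℤ) - j| ≤ (k : ℤ) then (2 * (k : ℝ≥0∞) + 1)⁻¹ else 0)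
    {x l : ℕ} (hx : k ≤ x) (hl : l ∈ Finset.Icc (x-k) (x+k)) : M.p x l = q k := by
  rw [h_walk x l hx, if_pos ((mem_Icc_iff hx).1 hl)]; rfl

lemma tsum_up (h_up : ∀ i j : ℕ, i < k → M.p i j = if j = i + 1 then 1 else 0)
    {x : ℕ} (hx : x < k) (f : ℕ → ℝ≥0∞) :
    ∑' l, M.p x l * f l = f (x+1) := by
  rw [tsum_eq_single (x+1) (fun l hl => by rw [h_up x l hx, if_neg hl, zero_mul]),
    h_up x (x+1) hx, if_pos rfl, one_mul]

end walk

section hitting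

variable (M : MarkovChain) (i : ℕ)

noncomputable def u (j : ℕ) : ℝ≥0∞ := ∑' n, M.hitAt i n j

noncomputable def Phit (n j : ℕ) : ℝ≥0∞ := ∑ m ∈ Finset.range n, M.hitAt i m j

variable {M i}

lemma Phit_succ (n j : ℕ) :
    Phit M i (n+1) j = if j = i then 1 else ∑' l, M.p j l * Phit M i n l := by
  rw [Phit, Finset.sum_range_succ']
  by_cases hj : j = i
  · simp [hj, MarkovChain.hitAt]
  · rw [if_neg hj]
    have h0 : M.hitAt i 0 j = 0 := by simp [MarkovChain.hitAt, hj]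
    rw [h0, add_zero]
    have h1 : ∀ m, M.hitAt i (m+1) j = ∑' l, M.p j l * M.hitAt i m l := fun m => by
      simp [MarkovChain.hitAt, hj]
    simp only [h1]
    rw [← Summable.tsum_finsetSum (fun _ _ => ENNReal.summable)]
    exact tsum_congr fun l => by rw [← Finset.mul_sum]; rfl
  
lemma Phit_le_one : ∀ n j, Phit M i n j ≤ 1 := by
  intro n
  induction n with
  | zero => intro j; simp [Phit]
  | succ n ih =>
    intro j
    rw [Phit_succ]
    split
    · exact le_rfl
    · calc ∑' l, M.p j l * Phit M i n l ≤ ∑' l, M.p j l * 1 :=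
            ENNReal.tsum_le_tsum fun l => mul_le_mul_right (ih l) _
        _ = 1 := by simpa using M.row_sum j

lemma u_eq_iSup (j : ℕ) : u M i j = ⨆ n, Phit M i n j := ENNReal.tsum_eq_iSup_nat

lemma u_le_one (j : ℕ) : u M i j ≤ 1 := by
  rw [u_eq_iSup]; exact iSup_le fun n => Phit_le_one n j

lemma u_self : u M i i = 1 := by
  rw [u, tsum_eq_single 0 (fun n hn => ?_)]
  · simp [MarkovChain.hitAt]
  · cases n with
    | zero => exact absurd rfl hn
    | succ m => simp [MarkovChain.hitAt]

lemma u_rec {j : ℕ} (hj : j ≠ i) : u M i j = ∑' l, M.p j l * u M i l := by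
  rw [u, tsum_eq_zero_add' ENNReal.summable]
  have h0 : M.hitAt i 0 j = 0 := by simp [MarkovChain.hitAt, hj]
  have h1 : ∀ n, M.hitAt i (n+1) j = ∑' l, M.p j l * M.hitAt i n l := fun n => by
    simp [MarkovChain.hitAt, hj]
  simp only [h0, h1, zero_add]
  rw [ENNReal.tsum_comm]
  exact tsum_congr fun l => by rw [ENNReal.tsum_mul_left]; rfl

lemma u_super (x : ℕ) : ∑' l, M.p x l * u M i l ≤ u M i x := by
  by_cases hx : x = i
  · subst hx
    rw [u_self]
    calc ∑' l, M.p x l * u M x l ≤ ∑' l, M.p x l * 1 :=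
          ENNReal.tsum_le_tsum fun l => mul_le_mul_right (u_le_one l) _
      _ = 1 := by simpa using M.row_sum x
  · exact (u_rec hx).ge

end hitting

noncomputable def PHS (M : MarkovChain) (c : ℕ) : ℕ → ℕ → ℝ≥0∞
  | 0, j => if j ≤ c then 1 else 0
  | n+1, j => if j ≤ c then 1 else ∑' l, M.p j l * PHS M c n l

noncomputable def Wf (M : MarkovChain) (c N : ℕ) : ℕ → ℕ → ℝ≥0∞
  | 0, j => if N ≤ j then 1 else 0
  | n+1, j => if N ≤ j then 1 else if j ≤ c then 0 else ∑' l, M.p j l * Wf M c N n l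

noncomputable def Rf (M : MarkovChain) (c N : ℕ) : ℕ → ℕ → ℝ≥0∞
  | 0, j => if c < j ∧ j < N then 1 else 0
  | n+1, j => if c < j ∧ j < N then ∑' l, M.p j l * Rf M c N n l else 0

section stage1

variable {M : MarkovChain} {k c N : ℕ}

lemma PHS_le_one : ∀ n j, PHS M c n j ≤ 1 := by
  intro n
  induction n with
  | zero => intro j; rw [PHS]; split <;> simp
  | succ n ih =>
    intro j
    rw [PHS]
    split
    · exact le_rfl
    · calc ∑' l, M.p j l * PHS M c n l ≤ ∑' l, M.p j l * 1 :=
            ENNReal.tsum_le_tsum fun l => mul_le_mul_right (ih l) _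
        _ = 1 := by simpa using M.row_sum j

lemma Rf_le_one : ∀ n j, Rf M c N n j ≤ 1 := by
  intro n
  induction n with
  | zero => intro j; rw [Rf]; split <;> simp
  | succ n ih =>
    intro j
    rw [Rf]
    split
    · calc ∑' l, M.p j l * Rf M c N n l ≤ ∑' l, M.p j l * 1 :=
            ENNReal.tsum_le_tsum fun l => mul_le_mul_right (ih l) _
        _ = 1 := by simpa using M.row_sum j
    · exact zero_le_one

lemma Rf_notregion {n j : ℕ} (h : ¬(c < j ∧ j < N)) : Rf M c N n j = 0 := by
  cases n <;> simp [Rf, h]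

lemma partition : ∀ n j, 1 ≤ PHS M c n j + (Wf M c N n j + Rf M c N n j) := by
  intro n
  induction n with
  | zero =>
    intro j
    rcases le_or_gt j c with hc | hc
    · simp [PHS, hc]
    · rcases lt_or_ge j N with hN | hN
      · rw [Rf, if_pos ⟨hc, hN⟩]
        calc (1:ℝ≥0∞) ≤ Wf M c N 0 j + 1 := le_add_self
          _ ≤ _ := le_add_self
      · rw [Wf, if_pos hN]
        calc (1:ℝ≥0∞) ≤ 1 + Rf M c N 0 j := le_self_add
          _ ≤ _ := le_add_self
  | succ n ih =>
    intro j
    rcases le_or_gt j c with hc | hc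
    · rw [PHS, if_pos hc]; exact le_self_add
    · rcases le_or_gt N j with hN | hN
      · rw [Wf, if_pos hN]
        calc (1:ℝ≥0∞) ≤ 1 + Rf M c N (n+1) j := le_self_add
          _ ≤ PHS M c (n+1) j + (1 + Rf M c N (n+1) j) := le_add_self
      · have hreg : c < j ∧ j < N := ⟨hc, hN⟩
        rw [PHS, if_neg (not_le.2 hc), Wf, if_neg (not_le.2 hN), if_neg (not_le.2 hc),
          Rf, if_pos hreg]
        calc (1:ℝ≥0∞) = ∑' l, M.p j l * 1 := by simpa using (M.row_sum j).symm
          _ ≤ ∑' l, M.p j l * (PHS M c n l + (Wf M c N n l + Rf M c N n l)) :=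
            ENNReal.tsum_le_tsum fun l => mul_le_mul_right (ih l) _
          _ = _ := by
            simp only [mul_add]
            rw [ENNReal.tsum_add, ENNReal.tsum_add]

end stage1

section logbound

lemma log_pair {x k t : ℕ} (hx : k ≤ x) (ht : t ≤ 2*k) :
    Real.log (1 + ((x-k+t : ℕ) : ℝ)) + Real.log (1 + ((x-k+(2*k-t) : ℕ) : ℝ))
      ≤ 2 * Real.log (1 + x) := by
  have ha : ((x-k+t : ℕ) : ℝ) = (x:ℝ) - k + t := by
    push_cast [Nat.cast_sub hx]; ring
  have hb : ((x-k+(2*k-t) : ℕ) : ℝ) = (x:ℝ) + k - t := by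
    push_cast [Nat.cast_sub hx, Nat.cast_sub ht]; ring
  rw [ha, hb]
  have h1 : (0:ℝ) < 1 + ((x:ℝ) - k + t) := by
    have : (k:ℝ) ≤ x := by exact_mod_cast hx
    have ht0 : (0:ℝ) ≤ t := by positivity
    linarith
  have h2 : (0:ℝ) < 1 + ((x:ℝ) + k - t) := by
    have : (t:ℝ) ≤ 2*k := by exact_mod_cast ht
    linarith
  rw [← Real.log_mul (by linarith) (by linarith)]
  have hle : (1 + ((x:ℝ) - k + t)) * (1 + ((x:ℝ) + k - t)) ≤ (1 + x)^2 := by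
    nlinarith [sq_nonneg ((k:ℝ) - t)]
  calc Real.log ((1 + ((x:ℝ) - k + t)) * (1 + ((x:ℝ) + k - t)))
      ≤ Real.log ((1 + (x:ℝ))^2) := Real.log_le_log (by positivity) hle
    _ = 2 * Real.log (1 + x) := by rw [Real.log_pow]; push_cast; ring

lemma log_sum {x k : ℕ} (hx : k ≤ x) :
    ∑ l ∈ Finset.Icc (x-k) (x+k), Real.log (1 + (l:ℝ)) ≤ (2*k+1) * Real.log (1 + x) := by
  rw [← Finset.Ico_add_one_right_eq_Icc, Finset.sum_Ico_eq_sum_range]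
  have hlen : x + k + 1 - (x - k) = 2*k+1 := by omega
  rw [hlen]
  have hdouble : (2:ℝ) * ∑ t ∈ Finset.range (2*k+1), Real.log (1 + ((x-k+t : ℕ) : ℝ))
      = ∑ t ∈ Finset.range (2*k+1), (Real.log (1 + ((x-k+t : ℕ) : ℝ))
          + Real.log (1 + ((x-k+(2*k-t) : ℕ) : ℝ))) := by
    rw [Finset.sum_add_distrib]
    have := Finset.sum_range_reflect (fun t => Real.log (1 + ((x-k+t : ℕ) : ℝ))) (2*k+1)
    have heq : ∀ t ∈ Finset.range (2*k+1),
        Real.log (1 + ((x-k+(2*k+1-1-t) : ℕ) : ℝ)) = Real.log (1 + ((x-k+(2*k-t) : ℕ) : ℝ)) := by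
      intro t _
      have : x-k+(2*k+1-1-t) = x-k+(2*k-t) := by omega
      rw [this]

    rw [Finset.sum_congr rfl heq] at this
    linarith [this]
  have hsum : ∑ t ∈ Finset.range (2*k+1), (Real.log (1 + ((x-k+t : ℕ) : ℝ))
          + Real.log (1 + ((x-k+(2*k-t) : ℕ) : ℝ)))
      ≤ ∑ t ∈ Finset.range (2*k+1), 2 * Real.log (1 + x) := by
    refine Finset.sum_le_sum fun t htm => ?_
    exact log_pair hx (by simp at htm; omega)
  rw [Finset.sum_const, Finset.card_range, nsmul_eq_mul] at hsum
  have hc : ((2*k+1 : ℕ) : ℝ) = 2*(k:ℝ)+1 := by push_cast; ring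
  rw [hc] at hsum
  linarith [hdouble, hsum]

end logbound

lemma q_eq_ofReal (k : ℕ) : q k = ENNReal.ofReal (1/(2*(k:ℝ)+1)) := by
  have hpos : (0:ℝ) < 2*(k:ℝ)+1 := by positivity
  rw [one_div, ENNReal.ofReal_inv_of_pos hpos, q]
  congr 1
  rw [ENNReal.ofReal_add (by positivity) zero_le_one, ENNReal.ofReal_one,
    ENNReal.ofReal_mul (by norm_num), ENNReal.ofReal_natCast]
  norm_num

noncomputable def g (N j : ℕ) : ℝ≥0∞ :=
  ENNReal.ofReal (Real.log (1 + (j:ℝ)) / Real.log (1 + (N:ℝ)))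

section wbound

variable {M : MarkovChain} {k c N : ℕ}

lemma g_ge_one (hN : 1 ≤ N) {j : ℕ} (hj : N ≤ j) : 1 ≤ g N j := by
  rw [g, ← ENNReal.ofReal_one]
  refine ENNReal.ofReal_le_ofReal ?_
  have hNpos : 0 < Real.log (1 + (N:ℝ)) := by
    refine Real.log_pos ?_
    have : (1:ℝ) ≤ (N:ℝ) := by exact_mod_cast hN
    linarith
  rw [le_div_iff₀ hNpos, one_mul]
  refine Real.log_le_log (by positivity) ?_
  have : (N:ℝ) ≤ (j:ℝ) := by exact_mod_cast hj
  linarith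

lemma W_le_g
    (h_walk : ∀ i j : ℕ, k ≤ i →
      M.p i j = if |(i : ℤ) - j| ≤ (k : ℤ) then (2 * (k : ℝ≥0∞) + 1)⁻¹ else 0)
    (hc : 2*k ≤ c) (hN : c < N) : ∀ n j, Wf M c N n j ≤ g N j := by
  have hN1 : 1 ≤ N := by omega
  have hNpos : 0 < Real.log (1 + (N:ℝ)) := by
    refine Real.log_pos ?_
    have : (1:ℝ) ≤ (N:ℝ) := by exact_mod_cast hN1
    linarith
  intro n
  induction n with
  | zero =>
    intro j
    rw [Wf]
    split
    · exact g_ge_one hN1 ‹_›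
    · exact zero_le
  | succ n ih =>
    intro j
    rw [Wf]
    split
    · exact g_ge_one hN1 ‹_›
    split
    · exact zero_le
    · -- region case : c < j < N
      have hcj : ¬ j ≤ c := ‹_›
      have hjk : k ≤ j := by omega
      calc ∑' l, M.p j l * Wf M c N n l
          ≤ ∑' l, M.p j l * g N l := ENNReal.tsum_le_tsum fun l => mul_le_mul_right (ih l) _
        _ = ∑ l ∈ Finset.Icc (j-k) (j+k), q k * g N l := tsum_walk h_walk hjk _
        _ ≤ g N j := ?_
      -- convert to real inequality
      have hterm : ∀ l, q k * g N l
          = ENNReal.ofReal ((1/(2*(k:ℝ)+1)) * (Real.log (1 + (l:ℝ)) / Real.log (1 + (N:ℝ)))) := by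
        intro l
        rw [q_eq_ofReal, g, ← ENNReal.ofReal_mul (by positivity)]
      simp only [hterm]
      have hnn : ∀ l : ℕ, (0:ℝ) ≤ 1/(2*(k:ℝ)+1) * (Real.log (1 + (l:ℝ)) / Real.log (1 + (N:ℝ))) := by
        intro l
        have h0 : (0:ℝ) ≤ Real.log (1 + (l:ℝ)) := Real.log_nonneg (by linarith [Nat.cast_nonneg (α := ℝ) l])
        positivity
      rw [← ENNReal.ofReal_sum_of_nonneg (fun l _ => hnn l)]
      refine ENNReal.ofReal_le_ofReal ?_
      have hls := log_sum (x := j) (k := k) hjk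
      have hLNne : Real.log (1 + (N:ℝ)) ≠ 0 := ne_of_gt hNpos
      have hkne : (2*(k:ℝ)+1) ≠ 0 := by positivity
      calc ∑ l ∈ Finset.Icc (j-k) (j+k), 1/(2*(k:ℝ)+1) * (Real.log (1 + (l:ℝ)) / Real.log (1 + (N:ℝ)))
          = (∑ l ∈ Finset.Icc (j-k) (j+k), Real.log (1 + (l:ℝ))) * (1/((2*(k:ℝ)+1) * Real.log (1 + (N:ℝ)))) := by
            rw [Finset.sum_mul]
            refine Finset.sum_congr rfl fun l _ => ?_
            field_simp
        _ ≤ ((2*(k:ℝ)+1) * Real.log (1 + (j:ℝ))) * (1/((2*(k:ℝ)+1) * Real.log (1 + (N:ℝ)))) := by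
            have hpos1 : (0:ℝ) ≤ 1/((2*(k:ℝ)+1) * Real.log (1 + (N:ℝ))) :=
              le_of_lt (div_pos one_pos (mul_pos (by positivity) hNpos))
            refine mul_le_mul_of_nonneg_right ?_ hpos1
            convert hls using 2 <;> push_cast <;> ring
        _ = Real.log (1 + (j:ℝ)) / Real.log (1 + (N:ℝ)) := by
            field_simp

end wbound

section rdecay

variable {M : MarkovChain} {k c N : ℕ}

lemma R_decay
    (h_walk : ∀ i j : ℕ, k ≤ i →
      M.p i j = if |(i : ℤ) - j| ≤ (k : ℤ) then (2 * (k : ℝ≥0∞) + 1)⁻¹ else 0)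
    (hk : 0 < k) (hc : 2*k ≤ c) :
    ∀ d n j, j ≤ c + d*k → d ≤ n → Rf M c N n j + q k ^ d ≤ 1 := by
  intro d
  induction d with
  | zero =>
    intro n j hj _
    rw [pow_zero, Rf_notregion (by omega), zero_add]
  | succ d ih =>
    intro n j hj hdn
    obtain ⟨n', rfl⟩ : ∃ n', n = n' + 1 := ⟨n - 1, by omega⟩
    by_cases hreg : c < j ∧ j < N
    · have hjk : k ≤ j := by omega
      rw [Rf, if_pos hreg, tsum_walk h_walk hjk]
      have hmem : j - k ∈ Finset.Icc (j-k) (j+k) := Finset.mem_Icc.2 (by omega)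
      rw [← Finset.add_sum_erase _ _ hmem]
      have herase : ∑ l ∈ (Finset.Icc (j-k) (j+k)).erase (j-k), q k * Rf M c N n' l
          ≤ 2*k * q k := by
        have hcard : ((Finset.Icc (j-k) (j+k)).erase (j-k)).card = 2*k := by
          rw [Finset.card_erase_of_mem hmem, Nat.card_Icc]; omega
        calc ∑ l ∈ (Finset.Icc (j-k) (j+k)).erase (j-k), q k * Rf M c N n' l
            ≤ ∑ _l ∈ (Finset.Icc (j-k) (j+k)).erase (j-k), q k :=
              Finset.sum_le_sum fun l _ => by
                calc q k * Rf M c N n' l ≤ q k * 1 := mul_le_mul_right (Rf_le_one n' l) _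
                  _ = q k := mul_one _
          _ = (2*k) * q k := by rw [Finset.sum_const, hcard, nsmul_eq_mul]; push_cast; ring
      have hexp : (d+1)*k = d*k+k := by ring
      have hih := ih n' (j-k) (by omega) (by omega)
      calc q k * Rf M c N n' (j-k) + ∑ l ∈ (Finset.Icc (j-k) (j+k)).erase (j-k), q k * Rf M c N n' l
            + q k ^ (d+1)
          ≤ q k * Rf M c N n' (j-k) + 2*k * q k + q k * q k ^ d := by
            rw [pow_succ]
            exact add_le_add (add_le_add le_rfl herase) (by rw [mul_comm])
        _ = q k * (Rf M c N n' (j-k) + q k ^ d) + 2*k * q k := by ring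
        _ ≤ q k * 1 + 2*k * q k := add_le_add (mul_le_mul_right hih _) le_rfl
        _ = (2 * (k:ℝ≥0∞) + 1) * q k := by ring
        _ = 1 := mul_q k
    · rw [Rf_notregion hreg, zero_add]
      exact pow_le_one' (q_le_one k) _

lemma R_submul : ∀ a b j, Rf M c N (a+b) j ≤ Rf M c N a j * ⨆ l, Rf M c N b l := by
  intro a
  induction a with
  | zero =>
    intro b j
    rw [zero_add]
    by_cases hreg : c < j ∧ j < N
    · rw [Rf, if_pos hreg, one_mul]
      exact le_iSup (fun l => Rf M c N b l) j
    · rw [Rf_notregion hreg]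
      exact zero_le
  | succ a ih =>
    intro b j
    have hshift : a + 1 + b = (a + b) + 1 := by omega
    rw [hshift]
    by_cases hreg : c < j ∧ j < N
    · rw [Rf, if_pos hreg, Rf, if_pos hreg, ← ENNReal.tsum_mul_right]
      refine ENNReal.tsum_le_tsum fun l => ?_
      rw [mul_assoc]
      exact mul_le_mul_right (ih b l) _
    · rw [Rf_notregion hreg, Rf_notregion hreg, zero_mul]

lemma R_sup_le
    (h_walk : ∀ i j : ℕ, k ≤ i →
      M.p i j = if |(i : ℤ) - j| ≤ (k : ℤ) then (2 * (k : ℝ≥0∞) + 1)⁻¹ else 0)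
    (hk : 0 < k) (hc : 2*k ≤ c) :
    (⨆ l, Rf M c N N l) ≤ 1 - q k ^ N := by
  refine iSup_le fun l => ?_
  by_cases hreg : c < l ∧ l < N
  · have hl : l ≤ c + N*k := by
      have : N ≤ N*k := Nat.le_mul_of_pos_right N hk
      omega
    exact ENNReal.le_sub_of_add_le_right (ENNReal.pow_ne_top (q_ne_top k))
      (R_decay h_walk hk hc N N l hl le_rfl)
  · rw [Rf_notregion hreg]; exact zero_le

lemma R_pow
    (h_walk : ∀ i j : ℕ, k ≤ i →
      M.p i j = if |(i : ℤ) - j| ≤ (k : ℤ) then (2 * (k : ℝ≥0∞) + 1)⁻¹ else 0)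
    (hk : 0 < k) (hc : 2*k ≤ c) :
    ∀ b j, Rf M c N (b*N) j ≤ (1 - q k ^ N)^b := by
  intro b
  induction b with
  | zero => intro j; rw [pow_zero, zero_mul]; exact Rf_le_one 0 j
  | succ b ih =>
    intro j
    have : (b+1)*N = b*N + N := by ring
    rw [this, pow_succ]
    calc Rf M c N (b*N + N) j ≤ Rf M c N (b*N) j * ⨆ l, Rf M c N N l := R_submul _ _ _
      _ ≤ (1 - q k ^ N)^b * (1 - q k ^ N) :=
          mul_le_mul' (ih j) (R_sup_le h_walk hk hc)

end rdecay

section stage1main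

variable {M : MarkovChain} {k c : ℕ}

lemma PHS_sup_eq_one
    (h_walk : ∀ i j : ℕ, k ≤ i →
      M.p i j = if |(i : ℤ) - j| ≤ (k : ℤ) then (2 * (k : ℝ≥0∞) + 1)⁻¹ else 0)
    (hk : 0 < k) (hc : 2*k ≤ c) (j : ℕ) :
    (⨆ n, PHS M c n j) = 1 := by
  refine le_antisymm (iSup_le fun n => PHS_le_one n j) ?_
  set X := ⨆ n, PHS M c n j with hX
  refine ENNReal.le_of_forall_pos_le_add fun ε hε _ => ?_
  obtain ⟨N0, hN0⟩ := exists_nat_ge (Real.exp (Real.log (1 + (j:ℝ)) / (ε:ℝ)))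
  set N := max (c+1) N0 with hNdef
  have hcN : c < N := lt_of_lt_of_le (Nat.lt_succ_self c) (le_max_left _ _)
  have hN1 : 1 ≤ N := by omega
  have hNpos : 0 < Real.log (1 + (N:ℝ)) := by
    refine Real.log_pos ?_
    have : (1:ℝ) ≤ (N:ℝ) := by exact_mod_cast hN1
    linarith
  have hεR : (0:ℝ) < (ε:ℝ) := hε
  have hgε : g N j ≤ (ε : ℝ≥0∞) := by
    rw [g, ← ENNReal.ofReal_coe_nnreal]
    refine ENNReal.ofReal_le_ofReal ?_
    rw [div_le_iff₀ hNpos]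
    have hexp : Real.exp (Real.log (1 + (j:ℝ)) / (ε:ℝ)) ≤ 1 + (N:ℝ) := by
      have h1 : (N0:ℝ) ≤ (N:ℝ) := by exact_mod_cast le_max_right (c+1) N0
      linarith
    have hlog : Real.log (1 + (j:ℝ)) / (ε:ℝ) ≤ Real.log (1 + (N:ℝ)) := by
      calc Real.log (1 + (j:ℝ)) / (ε:ℝ) = Real.log (Real.exp (Real.log (1 + (j:ℝ)) / (ε:ℝ))) :=
            (Real.log_exp _).symm
        _ ≤ Real.log (1 + (N:ℝ)) := Real.log_le_log (Real.exp_pos _) hexp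
    calc Real.log (1 + (j:ℝ)) = (ε:ℝ) * (Real.log (1 + (j:ℝ)) / (ε:ℝ)) := by field_simp
      _ ≤ (ε:ℝ) * Real.log (1 + (N:ℝ)) := mul_le_mul_of_nonneg_left hlog (le_of_lt hεR)
  have hρ : (1 - q k ^ N) < 1 :=
    ENNReal.sub_lt_self ENNReal.one_ne_top one_ne_zero (pow_ne_zero N (q_ne_zero k))
  have hb : ∀ b, 1 ≤ X + g N j + (1 - q k ^ N)^b := by
    intro b
    calc (1:ℝ≥0∞) ≤ PHS M c (b*N) j + (Wf M c N (b*N) j + Rf M c N (b*N) j) := partition _ _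
      _ ≤ X + (g N j + (1 - q k ^ N)^b) := by
          refine add_le_add (le_iSup (fun n => PHS M c n j) (b*N)) ?_
          exact add_le_add (W_le_g h_walk hc hcN _ j) (R_pow h_walk hk hc b j)
      _ = X + g N j + (1 - q k ^ N)^b := by rw [add_assoc]
  have hlim : Tendsto (fun b : ℕ => X + g N j + (1 - q k ^ N)^b) atTop (𝓝 (X + g N j + 0)) :=
    Tendsto.const_add _ (ENNReal.tendsto_pow_atTop_nhds_zero_of_lt_one hρ)
  have h1 : (1:ℝ≥0∞) ≤ X + g N j + 0 := ge_of_tendsto hlim (Eventually.of_forall hb)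
  rw [add_zero] at h1
  exact h1.trans (add_le_add le_rfl hgε)

end stage1main

lemma tsum_split (f : ℕ → ℝ≥0∞) (y : ℕ) :
    ∑' l, f l = f y + ∑' l, (if l = y then 0 else f l) := by
  rw [ENNReal.tsum_eq_add_tsum_ite (f := f) y]
  congr 1
  exact tsum_congr fun l => by by_cases h : l = y <;> simp [h]

section recurrent

variable {M : MarkovChain} {k : ℕ}

theorem recurrent_of_walk
    (hk : 0 < k)
    (h_up : ∀ i j : ℕ, i < k → M.p i j = if j = i + 1 then 1 else 0)
    (h_walk : ∀ i j : ℕ, k ≤ i →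
      M.p i j = if |(i : ℤ) - j| ≤ (k : ℤ) then (2 * (k : ℝ≥0∞) + 1)⁻¹ else 0) :
    M.Recurrent := by
  intro i
  set c := max i (2*k) with hcdef
  have hic : i ≤ c := le_max_left _ _
  have hc : 2*k ≤ c := le_max_right _ _
  -- the minimum of u over {0,...,c}
  have hne : (Finset.range (c+1)).Nonempty := ⟨0, by simp⟩
  set θ := (Finset.range (c+1)).inf' hne (u M i) with hθdef
  have hθ_le : ∀ a, a ≤ c → θ ≤ u M i a := fun a ha =>
    Finset.inf'_le _ (Finset.mem_range.2 (by omega))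
  have hθ1 : θ ≤ 1 := (hθ_le 0 (Nat.zero_le c)).trans (u_le_one 0)
  have hθtop : θ ≠ ⊤ := (hθ1.trans_lt (by norm_num)).ne
  -- u ≥ θ everywhere
  have hPHS : ∀ n j, θ * PHS M c n j ≤ u M i j := by
    intro n
    induction n with
    | zero =>
      intro j
      rw [PHS]
      split
      · rw [mul_one]; exact hθ_le j ‹_›
      · rw [mul_zero]; exact zero_le
    | succ n ih =>
      intro j
      rw [PHS]
      split
      · rw [mul_one]; exact hθ_le j ‹_›
      · have hji : j ≠ i := fun h => ‹¬ j ≤ c› (h ▸ hic)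
        rw [← ENNReal.tsum_mul_left]
        calc ∑' l, θ * (M.p j l * PHS M c n l)
            = ∑' l, M.p j l * (θ * PHS M c n l) := tsum_congr fun l => by ring
          _ ≤ ∑' l, M.p j l * u M i l := ENNReal.tsum_le_tsum fun l => mul_le_mul_right (ih l) _
          _ ≤ u M i j := u_super j
  have hlow : ∀ j, θ ≤ u M i j := by
    intro j
    have := PHS_sup_eq_one h_walk hk hc (M := M) j
    calc θ = θ * ⨆ n, PHS M c n j := by rw [this, mul_one]
      _ = ⨆ n, θ * PHS M c n j := ENNReal.mul_iSup θ _
      _ ≤ u M i j := iSup_le fun n => hPHS n j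
  -- "Good" bound propagation along explicit paths
  set B : ℕ → ℝ≥0∞ := fun s => θ + q k ^ s * (1 - θ) with hB
  have hB0 : B 0 = 1 := by
    rw [hB]; simp only [pow_zero, one_mul]
    rw [add_comm]; exact tsub_add_cancel_of_le hθ1
  have hBmono : ∀ s s', s ≤ s' → B s' ≤ B s := by
    intro s s' hss
    exact add_le_add le_rfl (mul_le_mul' (pow_le_pow_of_le_one (zero_le) (q_le_one k) hss) le_rfl)
  have hGstep : ∀ x y s, M.p x y = q k → B s ≤ u M i y → B (s+1) ≤ u M i x := by
    intro x y s hpxy hy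
    have hrest : ∑' l, (if l = y then 0 else M.p x l) = 1 - q k := by
      have hsplit := (tsum_split (M.p x) y).symm
      rw [M.row_sum x, hpxy] at hsplit
      exact ENNReal.eq_sub_of_add_eq (q_ne_top k) (by rw [add_comm]; exact hsplit)
    have hBcalc : q k * B s + (1 - q k) * θ = B (s+1) := by
      rw [hB]
      simp only []
      rw [mul_add]
      have h2 : q k * (q k ^ s * (1-θ)) = q k ^(s+1) * (1-θ) := by rw [← mul_assoc, ← pow_succ']
      have h3 : q k * θ + (1 - q k) * θ = θ := by
        rw [← add_mul, add_comm, tsub_add_cancel_of_le (q_le_one k), one_mul]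
      calc q k * θ + q k * (q k ^ s * (1-θ)) + (1 - q k) * θ
          = (q k * θ + (1 - q k) * θ) + q k * (q k ^ s * (1-θ)) := by ring
        _ = θ + q k ^ (s+1) * (1-θ) := by rw [h3, h2]
    calc B (s+1) = q k * B s + (1 - q k) * θ := hBcalc.symm
      _ ≤ q k * u M i y + ∑' l, (if l = y then 0 else M.p x l) * u M i l := by
          refine add_le_add (mul_le_mul_right hy _) ?_
          rw [← hrest, ← ENNReal.tsum_mul_right]
          refine ENNReal.tsum_le_tsum fun l => ?_
          by_cases hl : l = y
          · simp [hl]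
          · simp only [if_neg hl]
            exact mul_le_mul_right (hlow l) _
      _ ≤ u M i x := by
          rw [← hpxy]
          have hsplit := tsum_split (fun l => M.p x l * u M i l) y
          calc M.p x y * u M i y + ∑' l, (if l = y then 0 else M.p x l) * u M i l
              = ∑' l, M.p x l * u M i l := by
                rw [hsplit]
                congr 1
                refine tsum_congr fun l => ?_
                by_cases hl : l = y <;> simp [hl]
            _ ≤ u M i x := u_super x
  -- one-step moves with exact probabilities
  have p_down : ∀ y : ℕ, M.p (y+k) y = q k := by
    intro y
    rw [h_walk _ _ (Nat.le_add_left k y), if_pos ?_]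
    · rfl
    · rw [abs_le]; push_cast; omega
  have p_up : ∀ x : ℕ, k ≤ x → M.p x (x+1) = q k := by
    intro x hx
    rw [h_walk _ _ hx, if_pos ?_]
    · rfl
    · rw [abs_le]; push_cast; omega
  have hGup : ∀ x s, B s ≤ u M i (x+1) → B (s+1) ≤ u M i x := by
    intro x s hx
    by_cases hxk : x < k
    · have hstep : u M i (x+1) ≤ u M i x := by
        have h1 := u_super (M := M) (i := i) x
        rw [tsum_up h_up hxk (u M i)] at h1
        exact h1
      exact ((hBmono s (s+1) (Nat.le_succ s)).trans hx).trans hstep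
    · exact hGstep x (x+1) s (p_up x (not_lt.1 hxk)) hx
  have hclimb : ∀ m x s, B s ≤ u M i (x+m) → B (s+m) ≤ u M i x := by
    intro m
    induction m with
    | zero => intro x s h; simpa using h
    | succ m ih =>
      intro x s h
      have h1 : B (s+m) ≤ u M i (x+1) := ih (x+1) s (by rw [show x+1+m = x+(m+1) by omega]; exact h)
      have := hGup x (s+m) h1
      rw [show s+(m+1) = s+m+1 by omega]
      exact this
  have hdown : ∀ d, B d ≤ u M i (i + k*d) := by
    intro d
    induction d with
    | zero => rw [hB0, Nat.mul_zero, Nat.add_zero, u_self]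
    | succ d ih =>
      have hx : i + k*(d+1) = (i + k*d) + k := by ring
      rw [hx]
      exact hGstep _ _ _ (p_down (i + k*d)) ih
  -- conclude θ = 1
  obtain ⟨a, ha_mem, haθ⟩ := Finset.exists_mem_eq_inf' hne (u M i)
  have hac : a ≤ c := by have := Finset.mem_range.1 ha_mem; omega
  have haz : a ≤ i + k*a := by
    calc a ≤ k*a := Nat.le_mul_of_pos_left a hk
      _ ≤ i + k*a := Nat.le_add_left _ _
  set m := (i + k*a) - a with hmdef
  have hm : a + m = i + k*a := by omega
  have hfin : B (a + m) ≤ θ := by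
    rw [hθdef, haθ]
    exact hclimb m a a (by rw [hm]; exact hdown a)
  have hzero : q k ^ (a+m) * (1 - θ) = 0 := by
    by_contra hne0
    have hlt : θ < θ + q k ^ (a+m) * (1 - θ) := ENNReal.lt_add_right hθtop hne0
    exact absurd (hlt.trans_le hfin) (lt_irrefl θ)
  have hθ_ge : 1 ≤ θ := by
    rcases mul_eq_zero.1 hzero with h | h
    · exact absurd h (pow_ne_zero _ (q_ne_zero k))
    · exact tsub_eq_zero_iff_le.1 h
  have huone : ∀ j, u M i j = 1 := fun j =>
    le_antisymm (u_le_one j) (hθ_ge.trans (hlow j))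
  calc ∑' n, M.firstReturn i n = ∑' n, ∑' l, M.p i l * M.hitAt i n l := rfl
    _ = ∑' l, ∑' n, M.p i l * M.hitAt i n l := ENNReal.tsum_comm
    _ = ∑' l, M.p i l * u M i l := tsum_congr fun l => ENNReal.tsum_mul_left
    _ = ∑' l, M.p i l := tsum_congr fun l => by rw [huone l, mul_one]
    _ = 1 := M.row_sum i

end recurrent

noncomputable def SD (M : MarkovChain) (k : ℕ) : ℕ → ℕ → ℕ → ℝ≥0∞
  | 0, x, j => if x = j then 1 else 0
  | n+1, x, j => if j ≤ k then (if x = j then 1 else 0) else ∑' l, M.p j l * SD M k n x l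

section partB

variable {M : MarkovChain} {k : ℕ}

lemma SD_absorb {n x j : ℕ} (hj : j ≤ k) : SD M k n x j = if x = j then 1 else 0 := by
  cases n <;> simp [SD, hj]

lemma tsum_ite_single (j : ℕ) (f : ℕ → ℝ≥0∞) :
    ∑' x : ℕ, (if x = j then f x else 0) = f j := by
  rw [tsum_eq_single j (fun x hx => by rw [if_neg hx])]
  rw [if_pos rfl]

lemma SD_mass : ∀ n j, ∑' x, SD M k n x j = 1 := by
  intro n
  induction n with
  | zero =>
    intro j
    calc ∑' x, SD M k 0 x j = ∑' x : ℕ, (if x = j then (1:ℝ≥0∞) else 0) := by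
          exact tsum_congr fun x => by rw [SD]
      _ = 1 := by
          have := tsum_ite_single j (fun _ => (1:ℝ≥0∞))
          simpa using this
  | succ n ih =>
    intro j
    by_cases hj : j ≤ k
    · calc ∑' x, SD M k (n+1) x j = ∑' x : ℕ, (if x = j then (1:ℝ≥0∞) else 0) :=
            tsum_congr fun x => by rw [SD_absorb hj]
        _ = 1 := by simpa using tsum_ite_single j (fun _ => (1:ℝ≥0∞))
    · calc ∑' x, SD M k (n+1) x j = ∑' x, ∑' l, M.p j l * SD M k n x l :=
            tsum_congr fun x => by rw [SD, if_neg hj]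
        _ = ∑' l, ∑' x, M.p j l * SD M k n x l := ENNReal.tsum_comm
        _ = ∑' l, M.p j l * ∑' x, SD M k n x l := tsum_congr fun l => ENNReal.tsum_mul_left
        _ = ∑' l, M.p j l := tsum_congr fun l => by rw [ih l, mul_one]
        _ = 1 := M.row_sum j

lemma sum_Icc_nat {j : ℕ} (hj : k ≤ j) :
    ∑ l ∈ Finset.Icc (j-k) (j+k), l = (2*k+1) * j := by
  rw [← Finset.Ico_add_one_right_eq_Icc, Finset.sum_Ico_eq_sum_range]
  have hlen : j + k + 1 - (j - k) = 2*k+1 := by omega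
  rw [hlen, Finset.sum_add_distrib, Finset.sum_const, Finset.card_range, smul_eq_mul]
  have e1 : 2*k+1-1 = 2*k := by omega
  have h2 : (∑ t ∈ Finset.range (2*k+1), t) * 2 = ((2*k+1) * k) * 2 := by
    rw [Finset.sum_range_id_mul_two, e1]; ring
  have h3 : ∑ t ∈ Finset.range (2*k+1), t = (2*k+1) * k := by omega
  rw [h3]
  have h4 : (2*k+1) * (j-k) + (2*k+1) * k = (2*k+1) * ((j-k)+k) := by rw [Nat.mul_add]
  rw [h4, Nat.sub_add_cancel hj]

lemma sum_Icc_cast {j : ℕ} (hj : k ≤ j) :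
    ∑ l ∈ Finset.Icc (j-k) (j+k), (l : ℝ≥0∞) = (2*(k:ℝ≥0∞)+1) * j := by
  rw [← Nat.cast_sum, sum_Icc_nat hj]
  push_cast
  ring

lemma SD_mart
    (h_walk : ∀ i j : ℕ, k ≤ i →
      M.p i j = if |(i : ℤ) - j| ≤ (k : ℤ) then (2 * (k : ℝ≥0∞) + 1)⁻¹ else 0) :
    ∀ n j, ∑' x : ℕ, (x:ℝ≥0∞) * SD M k n x j = j := by
  intro n
  induction n with
  | zero =>
    intro j
    calc ∑' x : ℕ, (x:ℝ≥0∞) * SD M k 0 x j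
        = ∑' x : ℕ, (if x = j then (x:ℝ≥0∞) * 1 else 0) := by
          refine tsum_congr fun x => ?_
          rw [SD]
          by_cases hx : x = j <;> simp [hx]
      _ = j := by rw [tsum_ite_single j (fun x => (x:ℝ≥0∞) * 1)]; rw [mul_one]
  | succ n ih =>
    intro j
    by_cases hj : j ≤ k
    · calc ∑' x : ℕ, (x:ℝ≥0∞) * SD M k (n+1) x j
          = ∑' x : ℕ, (if x = j then (x:ℝ≥0∞) * 1 else 0) := by
            refine tsum_congr fun x => ?_
            rw [SD_absorb hj]
            by_cases hx : x = j <;> simp [hx]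
        _ = j := by rw [tsum_ite_single j (fun x => (x:ℝ≥0∞) * 1)]; rw [mul_one]
    · have hjk : k ≤ j := by omega
      calc ∑' x : ℕ, (x:ℝ≥0∞) * SD M k (n+1) x j
          = ∑' x : ℕ, ∑' l, M.p j l * ((x:ℝ≥0∞) * SD M k n x l) := by
            refine tsum_congr fun x => ?_
            rw [SD, if_neg hj, ← ENNReal.tsum_mul_left]
            exact tsum_congr fun l => by ring
        _ = ∑' l, ∑' x : ℕ, M.p j l * ((x:ℝ≥0∞) * SD M k n x l) := ENNReal.tsum_comm
        _ = ∑' l, M.p j l * (l:ℝ≥0∞) := by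
            refine tsum_congr fun l => ?_
            rw [ENNReal.tsum_mul_left, ih l]
        _ = ∑ l ∈ Finset.Icc (j-k) (j+k), q k * (l:ℝ≥0∞) := tsum_walk h_walk hjk _
        _ = q k * ((2*(k:ℝ≥0∞)+1) * j) := by
            rw [← Finset.mul_sum, sum_Icc_cast hjk]
        _ = j := by rw [← mul_assoc, mul_comm (q k), mul_q, one_mul]

lemma SD_support
    (h_walk : ∀ i j : ℕ, k ≤ i →
      M.p i j = if |(i : ℤ) - j| ≤ (k : ℤ) then (2 * (k : ℝ≥0∞) + 1)⁻¹ else 0) :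
    ∀ n x j, j + n*k < x → SD M k n x j = 0 := by
  intro n
  induction n with
  | zero =>
    intro x j hx
    rw [SD, if_neg (by omega)]
  | succ n ih =>
    intro x j hx
    by_cases hj : j ≤ k
    · rw [SD_absorb hj, if_neg (by omega)]
    · rw [SD, if_neg hj]
      refine ENNReal.tsum_eq_zero.2 fun l => ?_
      by_cases hpl : M.p j l = 0
      · rw [hpl, zero_mul]
      · have hl : l ≤ j + k := by
          by_contra hll
          refine hpl ?_
          rw [h_walk j l (by omega), if_neg ?_]
          rw [abs_le]
          push_cast
          omega
        have hsup : SD M k n x l = 0 := by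
          refine ih x l ?_
          have : (n+1)*k = n*k + k := by ring
          omega
        rw [hsup, mul_zero]

noncomputable def AbsM (M : MarkovChain) (k n j : ℕ) : ℝ≥0∞ :=
  ∑' x, (if x ≤ k then SD M k n x j else 0)

noncomputable def NonAbs (M : MarkovChain) (k n j : ℕ) : ℝ≥0∞ :=
  ∑' x, (if x ≤ k then 0 else SD M k n x j)

lemma AbsM_add_NonAbs (n j : ℕ) : AbsM M k n j + NonAbs M k n j = 1 := by
  rw [AbsM, NonAbs, ← ENNReal.tsum_add]
  calc ∑' x, ((if x ≤ k then SD M k n x j else 0) + (if x ≤ k then 0 else SD M k n x j))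
      = ∑' x, SD M k n x j := tsum_congr fun x => by by_cases hx : x ≤ k <;> simp [hx]
    _ = 1 := SD_mass n j

lemma AbsM_le_one (n j : ℕ) : AbsM M k n j ≤ 1 := by
  rw [← AbsM_add_NonAbs n j]; exact le_self_add

lemma AbsM_ne_top (n j : ℕ) : AbsM M k n j ≠ ⊤ :=
  ((AbsM_le_one (M := M) (k := k) n j).trans_lt (by norm_num)).ne

lemma AbsM_zero (j : ℕ) : AbsM M k 0 j = if j ≤ k then 1 else 0 := by
  rw [AbsM]
  calc ∑' x, (if x ≤ k then SD M k 0 x j else 0)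
      = ∑' x : ℕ, (if x = j then (if x ≤ k then (1:ℝ≥0∞) else 0) else 0) := by
        refine tsum_congr fun x => ?_
        rw [SD]
        by_cases hx : x = j <;> by_cases hxk : x ≤ k <;> simp [hx, hxk]
    _ = _ := tsum_ite_single j _

lemma AbsM_absorbed {n j : ℕ} (hj : j ≤ k) : AbsM M k n j = 1 := by
  rw [AbsM]
  calc ∑' x, (if x ≤ k then SD M k n x j else 0)
      = ∑' x : ℕ, (if x = j then (1:ℝ≥0∞) else 0) := by
        refine tsum_congr fun x => ?_
        rw [SD_absorb hj]
        by_cases hx : x = j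
        · subst hx; rw [if_pos hj, if_pos rfl]
        · by_cases hxk : x ≤ k <;> simp [hx, hxk]
    _ = 1 := by simpa using tsum_ite_single j (fun _ => (1:ℝ≥0∞))

lemma AbsM_rec {n j : ℕ} (hj : ¬ j ≤ k) :
    AbsM M k (n+1) j = ∑' l, M.p j l * AbsM M k n l := by
  rw [AbsM]
  calc ∑' x, (if x ≤ k then SD M k (n+1) x j else 0)
      = ∑' x, ∑' l, (if x ≤ k then M.p j l * SD M k n x l else 0) := by
        refine tsum_congr fun x => ?_
        by_cases hx : x ≤ k
        · rw [if_pos hx, SD, if_neg hj]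
          exact tsum_congr fun l => by rw [if_pos hx]
        · rw [if_neg hx]
          rw [tsum_congr fun l => by rw [if_neg hx]]
          exact tsum_zero.symm
    _ = ∑' l, ∑' x, (if x ≤ k then M.p j l * SD M k n x l else 0) := ENNReal.tsum_comm
    _ = ∑' l, M.p j l * AbsM M k n l := by
        refine tsum_congr fun l => ?_
        rw [AbsM, ← ENNReal.tsum_mul_left]
        exact tsum_congr fun x => by by_cases hx : x ≤ k <;> simp [hx]


lemma NonAbs_ge
    (h_walk : ∀ i j : ℕ, k ≤ i →
      M.p i j = if |(i : ℤ) - j| ≤ (k : ℤ) then (2 * (k : ℝ≥0∞) + 1)⁻¹ else 0)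
    (hk : 0 < k) (n : ℕ) :
    ((n:ℝ≥0∞)+1)⁻¹ ≤ NonAbs M k n (2*k) := by
  have hkne : (k:ℝ≥0∞) ≠ 0 := Nat.cast_ne_zero.2 (by omega)
  have hktop : (k:ℝ≥0∞) ≠ ⊤ := ENNReal.natCast_ne_top k
  have hmart := SD_mart h_walk n (2*k)
  set A := AbsM M k n (2*k) with hA
  set Nn := NonAbs M k n (2*k) with hNn
  have hle : ((2*k : ℕ):ℝ≥0∞) ≤ (k:ℝ≥0∞) * A + ((2*k+n*k : ℕ):ℝ≥0∞) * Nn := by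
    rw [← hmart, hA, hNn, AbsM, NonAbs, ← ENNReal.tsum_mul_left, ← ENNReal.tsum_mul_left,
      ← ENNReal.tsum_add]
    refine ENNReal.tsum_le_tsum fun x => ?_
    by_cases hxk : x ≤ k
    · rw [if_pos hxk, if_pos hxk, mul_zero, add_zero]
      exact mul_le_mul_left (by exact_mod_cast hxk) _
    · rw [if_neg hxk, if_neg hxk, mul_zero, zero_add]
      by_cases hSD : SD M k n x (2*k) = 0
      · rw [hSD, mul_zero, mul_zero]
      · have hxb : x ≤ 2*k + n*k := by
          by_contra hxb
          exact hSD (SD_support h_walk n x (2*k) (by omega))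
        exact mul_le_mul_left (by exact_mod_cast hxb) _
  have hsplit : A + Nn = 1 := AbsM_add_NonAbs n (2*k)
  have heq : (k:ℝ≥0∞) * A + ((2*k+n*k : ℕ):ℝ≥0∞) * Nn
      = (k:ℝ≥0∞) * (A + Nn) + ((k:ℝ≥0∞) + (n:ℝ≥0∞)*k) * Nn := by
    push_cast
    ring
  rw [heq, hsplit, mul_one] at hle
  have h2k : ((2*k : ℕ):ℝ≥0∞) = (k:ℝ≥0∞) + (k:ℝ≥0∞) := by push_cast; ring
  rw [h2k] at hle
  have hcancel : (k:ℝ≥0∞) ≤ ((k:ℝ≥0∞) + (n:ℝ≥0∞)*k) * Nn :=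
    (ENNReal.add_le_add_iff_left hktop).1 hle
  have hrw : ((k:ℝ≥0∞) + (n:ℝ≥0∞)*k) * Nn = (k:ℝ≥0∞) * (((n:ℝ≥0∞)+1) * Nn) := by ring
  rw [hrw] at hcancel
  have h1 : 1 ≤ ((n:ℝ≥0∞)+1) * Nn := by
    have hc2 : (k:ℝ≥0∞) * 1 ≤ (k:ℝ≥0∞) * (((n:ℝ≥0∞)+1) * Nn) := by
      rw [mul_one]; exact hcancel
    exact (ENNReal.mul_le_mul_iff_right hkne hktop).1 hc2
  refine (ENNReal.inv_le_iff_le_mul ?_ ?_).2 h1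
  · intro _; simp
  · intro h
    exact absurd h (by simp [ENNReal.add_ne_top])

lemma Phit_le_AbsM
    (h_walk : ∀ i j : ℕ, k ≤ i →
      M.p i j = if |(i : ℤ) - j| ≤ (k : ℤ) then (2 * (k : ℝ≥0∞) + 1)⁻¹ else 0) :
    ∀ m j, Phit M k (m+1) j ≤ AbsM M k m j := by
  intro m
  induction m with
  | zero =>
    intro j
    have h1 : Phit M k 1 j = if j = k then 1 else 0 := by
      rw [Phit, Finset.sum_range_one]
      simp [MarkovChain.hitAt]
    rw [h1, AbsM_zero]
    by_cases hj : j = k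
    · rw [if_pos hj, if_pos (by omega)]
    · rw [if_neg hj]; exact zero_le
  | succ m ih =>
    intro j
    rw [Phit_succ]
    by_cases hj : j ≤ k
    · rw [AbsM_absorbed hj]
      split
      · exact le_rfl
      · calc ∑' l, M.p j l * Phit M k (m+1) l ≤ ∑' l, M.p j l * 1 :=
            ENNReal.tsum_le_tsum fun l => mul_le_mul_right (Phit_le_one _ _) _
          _ = 1 := by simpa using M.row_sum j
    · have hjk : j ≠ k := by omega
      rw [if_neg hjk, AbsM_rec hj]
      exact ENNReal.tsum_le_tsum fun l => mul_le_mul_right (ih l) _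

theorem mean_eq_top
    (hk : 0 < k)
    (h_up : ∀ i j : ℕ, i < k → M.p i j = if j = i + 1 then 1 else 0)
    (h_walk : ∀ i j : ℕ, k ≤ i →
      M.p i j = if |(i : ℤ) - j| ≤ (k : ℤ) then (2 * (k : ℝ≥0∞) + 1)⁻¹ else 0) :
    ∑' n : ℕ, ((n : ℝ≥0∞) + 1) * M.firstReturn k n = ⊤ := by
  have hrec : ∑' n, M.firstReturn k n = 1 := recurrent_of_walk hk h_up h_walk k
  set T : ℕ → ℝ≥0∞ := fun m => ∑' n : ℕ, (if m ≤ n then M.firstReturn k n else 0) with hT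
  have hmean : ∑' n : ℕ, ((n : ℝ≥0∞) + 1) * M.firstReturn k n = ∑' m, T m := by
    have hcount : ∀ n : ℕ, ((n:ℝ≥0∞)+1) = ∑' m : ℕ, (if m ≤ n then (1:ℝ≥0∞) else 0) := by
      intro n
      rw [tsum_eq_sum (s := Finset.range (n+1))
        (fun m hm => if_neg (fun hc => hm (Finset.mem_range.2 (by omega))))]
      rw [Finset.sum_congr rfl (fun m hm => if_pos (by have := Finset.mem_range.1 hm; omega))]
      rw [Finset.sum_const, Finset.card_range, nsmul_eq_mul, mul_one]
      push_cast; ring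
    calc ∑' n : ℕ, ((n : ℝ≥0∞) + 1) * M.firstReturn k n
        = ∑' n : ℕ, ∑' m : ℕ, (if m ≤ n then (1:ℝ≥0∞) else 0) * M.firstReturn k n := by
          refine tsum_congr fun n => ?_
          rw [hcount n]
          exact ENNReal.tsum_mul_right.symm
      _ = ∑' m : ℕ, ∑' n : ℕ, (if m ≤ n then (1:ℝ≥0∞) else 0) * M.firstReturn k n :=
          ENNReal.tsum_comm
      _ = ∑' m, T m := by
          refine tsum_congr fun m => tsum_congr fun n => ?_
          by_cases h : m ≤ n <;> simp [h]
  have htail : ∀ m, (∑ n ∈ Finset.range m, M.firstReturn k n) + T m = 1 := by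
    intro m
    rw [hT]
    have hsum2 : ∑ n ∈ Finset.range m, M.firstReturn k n
        = ∑' n : ℕ, (if m ≤ n then 0 else M.firstReturn k n) := by
      rw [tsum_eq_sum (s := Finset.range m)
        (fun n hn => by rw [if_pos (by simp at hn; omega)])]
      exact Finset.sum_congr rfl fun n hn => (if_neg (by simp at hn; omega)).symm
    rw [hsum2, ← ENNReal.tsum_add, ← hrec]
    exact (tsum_congr fun n => by by_cases h : m ≤ n <;> simp [h]).symm
  have hq2k : M.p k (2*k) = q k := by
    rw [h_walk k (2*k) le_rfl, if_pos ?_]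
    · rfl
    · rw [abs_le]; push_cast; omega
  have hTb : ∀ m : ℕ, q k * ((m:ℝ≥0∞)+1)⁻¹ ≤ T (m+1) := by
    intro m
    have hS : ∑ n ∈ Finset.range (m+1), M.firstReturn k n
        = ∑' l, M.p k l * Phit M k (m+1) l := by
      calc ∑ n ∈ Finset.range (m+1), M.firstReturn k n
          = ∑ n ∈ Finset.range (m+1), ∑' l, M.p k l * M.hitAt k n l := rfl
        _ = ∑' l, ∑ n ∈ Finset.range (m+1), M.p k l * M.hitAt k n l :=
            (Summable.tsum_finsetSum (fun _ _ => ENNReal.summable)).symm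
        _ = ∑' l, M.p k l * Phit M k (m+1) l :=
            tsum_congr fun l => by rw [Phit, ← Finset.mul_sum]
    have hone : (∑' l, M.p k l * Phit M k (m+1) l)
        + ∑' l, M.p k l * (1 - Phit M k (m+1) l) = 1 := by
      rw [← ENNReal.tsum_add]
      have hpt : ∀ l, M.p k l * Phit M k (m+1) l + M.p k l * (1 - Phit M k (m+1) l)
          = M.p k l := by
        intro l
        rw [← mul_add]
        have hca := tsub_add_cancel_of_le (Phit_le_one (M := M) (i := k) (m+1) l)
        rw [add_comm] at hca
        rw [hca, mul_one]
      rw [tsum_congr hpt]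
      exact M.row_sum k
    have hSne : (∑' l, M.p k l * Phit M k (m+1) l) ≠ ⊤ := by
      refine ne_top_of_le_ne_top ENNReal.one_ne_top ?_
      rw [← hone]; exact le_self_add
    have hTeq : T (m+1) = ∑' l, M.p k l * (1 - Phit M k (m+1) l) := by
      have h1 := htail (m+1)
      rw [hS] at h1
      exact (ENNReal.add_right_inj hSne).1 (h1.trans hone.symm)
    rw [hTeq]
    calc q k * ((m:ℝ≥0∞)+1)⁻¹ ≤ q k * (1 - Phit M k (m+1) (2*k)) := by
          refine mul_le_mul_right ?_ _
          calc ((m:ℝ≥0∞)+1)⁻¹ ≤ NonAbs M k m (2*k) := NonAbs_ge h_walk hk m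
            _ ≤ 1 - AbsM M k m (2*k) :=
                ENNReal.le_sub_of_add_le_left (AbsM_ne_top m _) (AbsM_add_NonAbs m (2*k)).le
            _ ≤ 1 - Phit M k (m+1) (2*k) := tsub_le_tsub_left (Phit_le_AbsM h_walk m (2*k)) 1
      _ = M.p k (2*k) * (1 - Phit M k (m+1) (2*k)) := by rw [hq2k]
      _ ≤ ∑' l, M.p k l * (1 - Phit M k (m+1) l) :=
          ENNReal.le_tsum (2*k)
  have hharm : ∑' m : ℕ, ((m:ℝ≥0∞)+1)⁻¹ = ⊤ := by
    by_contra h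
    have h1 : Summable (fun m : ℕ => ((m:NNReal)+1)⁻¹) := by
      refine ENNReal.tsum_coe_ne_top_iff_summable.1 ?_
      have hco : ∀ m : ℕ, (((((m:NNReal)+1)⁻¹ : NNReal)) : ℝ≥0∞) = ((m:ℝ≥0∞)+1)⁻¹ := by
        intro m
        rw [ENNReal.coe_inv (by positivity)]
        push_cast
        ring_nf
      rw [tsum_congr hco]
      exact h
    have h2 : Summable (fun m : ℕ => ((m:ℝ)+1)⁻¹) := by
      have h2' := NNReal.summable_coe.2 h1
      have : ∀ m : ℕ, ((((m:NNReal)+1)⁻¹ : NNReal) : ℝ) = ((m:ℝ)+1)⁻¹ := by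
        intro m; push_cast; ring_nf
      simpa [this] using h2'
    have h3 : Summable (fun n : ℕ => ((n:ℝ))⁻¹) := by
      refine (summable_nat_add_iff 1).1 ?_
      have : ∀ n : ℕ, (((n+1 : ℕ):ℝ))⁻¹ = ((n:ℝ)+1)⁻¹ := by intro n; push_cast; ring_nf
      simpa [this] using h2
    exact Real.not_summable_natCast_inv h3
  rw [hmean]
  refine top_le_iff.1 ?_
  calc (⊤:ℝ≥0∞) = q k * ⊤ := (ENNReal.mul_top (q_ne_zero k)).symm
    _ = q k * ∑' m : ℕ, ((m:ℝ≥0∞)+1)⁻¹ := by rw [hharm]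
    _ = ∑' m : ℕ, q k * ((m:ℝ≥0∞)+1)⁻¹ := ENNReal.tsum_mul_left.symm
    _ ≤ ∑' m, T (m+1) := ENNReal.tsum_le_tsum hTb
    _ ≤ T 0 + ∑' m, T (m+1) := le_add_self
    _ = ∑' m, T m := (tsum_eq_zero_add' ENNReal.summable).symm

end partB
end Stmt5

/-- the random walk that moves to each of the `2k+1` nearest states
with equal probability (and moves up by one below `k`) is null recurrent. -/
theorem stmt5 (M : MarkovChain) (k : ℕ) (hk : 0 < k)
    (hirr : M.Irreducible)
    (h_up : ∀ i j : ℕ, i < k → M.p i j = if j = i + 1 then 1 else 0)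
    (h_walk : ∀ i j : ℕ, k ≤ i →
      M.p i j = if |(i : ℤ) - j| ≤ (k : ℤ) then (2 * (k : ℝ≥0∞) + 1)⁻¹ else 0) :
    M.NullRecurrent := by
  refine ⟨Stmt5.recurrent_of_walk hk h_up h_walk, ?_⟩
  intro hpos
  have hfin := hpos.2 k
  rw [Stmt5.mean_eq_top hk h_up h_walk] at hfin
  exact absurd hfin (lt_irrefl ⊤)
end
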